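/- Projection trichotomy I. Let X be a CAT(0) cube complex and let γ: [0,∞) → X be a combinatorial geodesic ray. For i ≥ 0 let H_i be the hyperplane dual to γ([i,i+1]), let γ* be the projection of γ to the contact graph (the embedded edge-path in C(X) through the vertices H_0, H_1, H_2, ...), and let Λ(γ) be the full subgraph of C(X) spanned by W(γ). Then at least one of the following holds: (1) the inclusions γ* → C(X) and Λ(γ) → C(X) are quasi-isometric embeddings; (2) for every p ≥ 0, Λ(γ) contains a complete bipartite subgraph K_{p,p}; (3) there exists R ≥ 0 such that for every t ≥ 0 there is a hyperplane H for which γ ∩ N_R(N(H)) contains a connected subpath of length at least t. -/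

import Mathlib

/-!
Combinatorial model of a CAT(0) cube complex via Sageev duality.

`V` is the set of 0-cubes, `H` the set of hyperplanes, and `side h x : Bool`
records which halfspace of the hyperplane `h` contains the 0-cube `x`.
The axioms say exactly that `V` is the set of consistent orientations of the
hyperplanes, each differing from a fixed one on finitely many hyperplanes;
this is precisely the combinatorial data of (the 0-skeleton of) a CAT(0) cube
complex, together with its hyperplane structure.
-/
structure CCC where
  V : Type
  H : Type
  side : H → V → Bool
  nonempty_V : Nonempty V
  vertex_ext : ∀ x y : V, (∀ h, side h x = side h y) → x = y
  sep_finite : ∀ x y : V, {h : H | side h x ≠ side h y}.Finite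
  halfspace_nonempty : ∀ h b, ∃ x, side h x = b
  hyp_inj : ∀ h h' : H, (∀ x, side h x = side h' x) → h = h'
  hyp_inj' : ∀ h h' : H, (∀ x, side h x = !(side h' x)) → h = h'
  realize : ∀ (o : H → Bool) (x : V),
    (∀ h h', ∃ y, side h y = o h ∧ side h' y = o h') →
    {h : H | o h ≠ side h x}.Finite →
    ∃ y, ∀ h, side h y = o h

namespace CCC

variable (X : CCC)

/-- The combinatorial (1-skeleton) distance between 0-cubes: the number of
separating hyperplanes. -/
noncomputable def dist (x y : X.V) : ℕ := (X.sep_finite x y).toFinset.card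

/-- Two 0-cubes are adjacent (joined by a 1-cube) iff exactly one hyperplane
separates them. -/
def Adj (x y : X.V) : Prop :=
  ∃ h, X.side h x ≠ X.side h y ∧ ∀ h', X.side h' x ≠ X.side h' y → h' = h

/-- Two hyperplanes cross iff all four quarter-spaces are nonempty. -/
def Crosses (h h' : X.H) : Prop :=
  ∀ b b' : Bool, ∃ x, X.side h x = b ∧ X.side h' x = b'

/-- The hyperplane `h'` lies in the halfspace `b` of the hyperplane `h`. -/
def InHalf (h' h : X.H) (b : Bool) : Prop :=
  h' ≠ h ∧ ∃ c : Bool, ∀ x, X.side h x = !b → X.side h' x = c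

/-- `h` separates the hyperplanes `h₁` and `h₂`. -/
def SepH (h h₁ h₂ : X.H) : Prop :=
  ∃ b : Bool, X.InHalf h₁ h b ∧ X.InHalf h₂ h (!b)

/-- Two distinct hyperplanes contact iff no third hyperplane separates them. -/
def Contact (h h' : X.H) : Prop := h ≠ h' ∧ ¬ ∃ h'', X.SepH h'' h h'

/-- A facing triple: three distinct hyperplanes, each having a halfspace
containing the other two. -/
def FacingTriple (h₁ h₂ h₃ : X.H) : Prop :=
  h₁ ≠ h₂ ∧ h₁ ≠ h₃ ∧ h₂ ≠ h₃ ∧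
  ∃ b₁ b₂ b₃ : Bool,
    X.InHalf h₂ h₁ b₁ ∧ X.InHalf h₃ h₁ b₁ ∧
    X.InHalf h₁ h₂ b₂ ∧ X.InHalf h₃ h₂ b₂ ∧
    X.InHalf h₁ h₃ b₃ ∧ X.InHalf h₂ h₃ b₃

/-- A set of hyperplanes is inseparable if every hyperplane separating two of
its members belongs to it. -/
def Inseparable (U : Set X.H) : Prop :=
  ∀ u ∈ U, ∀ u' ∈ U, ∀ h, X.SepH h u u' → h ∈ U

/-- A set of hyperplanes is unidirectional if each member has a halfspace
containing only finitely many members. -/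
def Unidirectional (U : Set X.H) : Prop :=
  ∀ u ∈ U, ∃ b : Bool, {h | h ∈ U ∧ X.InHalf h u b}.Finite

def NoFacingTriple (U : Set X.H) : Prop :=
  ∀ h₁ ∈ U, ∀ h₂ ∈ U, ∀ h₃ ∈ U, ¬ X.FacingTriple h₁ h₂ h₃

/-- A unidirectional boundary set (UBS). -/
def IsUBS (U : Set X.H) : Prop :=
  U.Infinite ∧ X.Inseparable U ∧ X.Unidirectional U ∧ X.NoFacingTriple U

/-- Almost-equivalence: finite symmetric difference. -/
def AlmostEq (U U' : Set X.H) : Prop := (symmDiff U U').Finite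

/-- A minimal UBS. -/
def MinUBS (U : Set X.H) : Prop :=
  X.IsUBS U ∧ ∀ U' ⊆ U, X.IsUBS U' → X.AlmostEq U U'

/-- The simplex (= almost-equivalence class of UBSs) represented by `U` is a
face of the simplex represented by `V`. -/
def FaceOf (U V : Set X.H) : Prop :=
  ∃ U' V', X.IsUBS U' ∧ X.IsUBS V' ∧ X.AlmostEq U U' ∧ X.AlmostEq V V' ∧ U' ⊆ V'

/-- `U` decomposes, up to almost-equivalence, into `k` pairwise disjoint
minimal UBSs; i.e. the class of `U` is a `(k-1)`-simplex of `∂X`. -/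
def HasDim (U : Set X.H) (k : ℕ) : Prop :=
  ∃ 𝒰 : Fin k → Set X.H, (∀ i, X.MinUBS (𝒰 i)) ∧
    (∀ i j, i ≠ j → Disjoint (𝒰 i) (𝒰 j)) ∧ X.AlmostEq U (⋃ i, 𝒰 i)

/-- No infinite family of pairwise-crossing hyperplanes. -/
def NoInfiniteCrossing : Prop :=
  ∀ S : Set X.H, (∀ h ∈ S, ∀ h' ∈ S, h ≠ h' → X.Crosses h h') → S.Finite

def LocallyFinite : Prop := ∀ x : X.V, {y | X.Adj x y}.Finite

/-- A combinatorial geodesic ray (parameterized by its vertices). -/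
def IsGeodesicRay (γ : ℕ → X.V) : Prop :=
  ∀ m n : ℕ, m ≤ n → X.dist (γ m) (γ n) = n - m

/-- A bi-infinite combinatorial geodesic. -/
def IsGeodesicLine (α : ℤ → X.V) : Prop :=
  ∀ m n : ℤ, m ≤ n → (X.dist (α m) (α n) : ℤ) = n - m

/-- A combinatorial geodesic segment of length `n`. -/
def IsGeodSeg (c : ℕ → X.V) (n : ℕ) : Prop :=
  ∀ i j : ℕ, i ≤ j → j ≤ n → X.dist (c i) (c j) = j - i

/-- The set of hyperplanes crossing (dual to the 1-cubes of) the path `γ`. -/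
def WSet (γ : ℕ → X.V) : Set X.H :=
  {h | ∃ n : ℕ, X.side h (γ n) ≠ X.side h (γ (n+1))}

/-- The 0-cubes of the carrier `N(h)` of the hyperplane `h`. -/
def carrier (h : X.H) : Set X.V :=
  {x | ∃ y, X.Adj x y ∧ X.side h x ≠ X.side h y}

/-- An essential hyperplane: each halfspace contains 0-cubes arbitrarily far
from the carrier. -/
def EssentialHyp (h : X.H) : Prop :=
  ∀ b : Bool, ∀ n : ℕ, ∃ x, X.side h x = b ∧ ∀ y ∈ X.carrier h, n ≤ X.dist x y

/-- Combinatorial convexity of a set of 0-cubes (the 0-skeleton of a convex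
subcomplex). -/
def IsConvexSet (S : Set X.V) : Prop :=
  ∀ x ∈ S, ∀ y ∈ S, ∀ z, X.dist x z + X.dist z y = X.dist x y → z ∈ S

/-- `x` and `y` are joined by a combinatorial path avoiding `S`. -/
def ReachAvoid (S : Set X.V) (x y : X.V) : Prop :=
  ∃ (n : ℕ) (c : ℕ → X.V), c 0 = x ∧ c n = y ∧
    (∀ i < n, X.Adj (c i) (c (i+1))) ∧ ∀ i ≤ n, c i ∉ S

/-- No compact (finite) convex subcomplex disconnects `X`. -/
def CompactlyIndecomposable : Prop :=
  ∀ K : Set X.V, K.Finite → X.IsConvexSet K →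
    ∀ x y : X.V, x ∉ K → y ∉ K → X.ReachAvoid K x y

/-- `γ` bounds an eighth-flat: some eighth-flat (the subcomplex of the standard
tiling of `[0,∞)²` below the graph of an unbounded nondecreasing function)
embeds isometrically and cubically in `X` with image containing `γ`. -/
def BoundsEighthFlat (γ : ℕ → X.V) : Prop :=
  ∃ g : ℕ → ℕ, Monotone g ∧ (∀ N : ℕ, ∃ m, N ≤ g m) ∧
    ∃ e : {p : ℕ × ℕ // p.2 ≤ g p.1} → X.V,
      (∀ p q, X.dist (e p) (e q) = Nat.dist p.1.1 q.1.1 + Nat.dist p.1.2 q.1.2) ∧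
      ∀ n : ℕ, ∃ p, e p = γ n

/-- An edge-chain in the contact graph. -/
def CChain (c : ℕ → X.H) (n : ℕ) : Prop := ∀ i < n, X.Contact (c i) (c (i+1))

/-- Distance in the contact graph `C(X)` (`⊤` if there is no path). -/
noncomputable def cdist (h h' : X.H) : ℕ∞ :=
  sInf {e : ℕ∞ | ∃ (n : ℕ) (c : ℕ → X.H), c 0 = h ∧ c n = h' ∧ X.CChain c n ∧ e = n}

/-- An edge-chain in the crossing graph. -/
def XChain (c : ℕ → X.H) (n : ℕ) : Prop := ∀ i < n, X.Crosses (c i) (c (i+1))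

/-- Distance in the crossing graph `Δ(X)`. -/
noncomputable def xdist (h h' : X.H) : ℕ∞ :=
  sInf {e : ℕ∞ | ∃ (n : ℕ) (c : ℕ → X.H), c 0 = h ∧ c n = h' ∧ X.XChain c n ∧ e = n}

/-- Distance in the full subgraph `Λ(γ)` of the contact graph spanned by the
hyperplanes crossing `γ`. -/
noncomputable def ldist (γ : ℕ → X.V) (h h' : X.H) : ℕ∞ :=
  sInf {e : ℕ∞ | ∃ (n : ℕ) (c : ℕ → X.H), c 0 = h ∧ c n = h' ∧
    (∀ i ≤ n, c i ∈ X.WSet γ) ∧ X.CChain c n ∧ e = n}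

/-- Two 0-simplices of `∂X` (represented by minimal UBSs) are adjacent in the
1-skeleton of `∂X`. -/
def BAdj (U V : Set X.H) : Prop :=
  X.MinUBS U ∧ X.MinUBS V ∧ ¬ X.AlmostEq U V ∧
    ∃ W, X.IsUBS W ∧ X.FaceOf U W ∧ X.FaceOf V W

/-- Distance in the 1-skeleton of the simplicial boundary `∂X`, between the
0-simplices represented by the minimal UBSs `U` and `V`. -/
noncomputable def bdist (U V : Set X.H) : ℕ∞ :=
  sInf {e : ℕ∞ | ∃ (n : ℕ) (c : ℕ → Set X.H),
    X.AlmostEq (c 0) U ∧ X.AlmostEq (c n) V ∧ (∀ i ≤ n, X.MinUBS (c i)) ∧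
    (∀ i < n, X.BAdj (c i) (c (i+1)) ∨ X.AlmostEq (c i) (c (i+1))) ∧ e = n}

/-- Diameter of the contact graph. -/
noncomputable def cdiam : ℕ∞ := ⨆ (h : X.H) (h' : X.H), X.cdist h h'

/-- Diameter of the crossing graph. -/
noncomputable def xdiam : ℕ∞ := ⨆ (h : X.H) (h' : X.H), X.xdist h h'

/-- Diameter of the 1-skeleton of the simplicial boundary. -/
noncomputable def bdiam : ℕ∞ :=
  ⨆ (U : Set X.H) (V : Set X.H) (_ : X.MinUBS U) (_ : X.MinUBS V), X.bdist U V

/-- A consistent orientation of the hyperplanes: any two chosen halfspaces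
intersect. -/
def Consistent (χ : X.H → Bool) : Prop :=
  ∀ h h', ∃ x, X.side h x = χ h ∧ X.side h' x = χ h'

/-- The halfspace `b` of `h`, as a set of 0-cubes. -/
def Hs (h : X.H) (b : Bool) : Set X.V := {x | X.side h x = b}

/-- Every simplex of `∂X` is visible, i.e. represented by the set of
hyperplanes crossing some combinatorial geodesic ray. -/
def FullyVisible : Prop :=
  ∀ V, X.IsUBS V → ∃ γ : ℕ → X.V, X.IsGeodesicRay γ ∧ X.AlmostEq (X.WSet γ) V

/-- The halfspace `b` of `h` is shallow: it lies within uniformly bounded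
distance of the carrier of `h`. -/
def ShallowHalf (h : X.H) (b : Bool) : Prop :=
  ∃ R : ℕ, ∀ x, X.side h x = b → ∃ y ∈ X.carrier h, X.dist x y ≤ R

/-- An `r`-avoiding combinatorial path (with respect to the basepoint `x₀`)
of length `n` from `a` to `b`. -/
def AvoidPathLen (x₀ : X.V) (r : ℕ) (a b : X.V) (n : ℕ) : Prop :=
  ∃ c : ℕ → X.V, c 0 = a ∧ c n = b ∧
    (∀ i < n, X.Adj (c i) (c (i+1))) ∧ ∀ i ≤ n, r ≤ X.dist (c i) x₀

/-- Combinatorial geodesic completeness: for every (finite) maximal family of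
pairwise-crossing hyperplanes and every choice of halfspaces, the intersection
of the chosen halfspaces contains 0-cubes arbitrarily far from the
intersection of the carriers. -/
def CombGeodComplete : Prop :=
  ∀ (n : ℕ) (W : Fin n → X.H), Function.Injective W →
    (∀ i j, i ≠ j → X.Crosses (W i) (W j)) →
    (∀ h, ¬ ∀ i, X.Crosses h (W i)) →
    ∀ χ : Fin n → Bool, ∀ R : ℕ,
      ∃ x, (∀ i, X.side (W i) x = χ i) ∧
        ∀ y, (∀ i, y ∈ X.carrier (W i)) → R ≤ X.dist x y

/-- `X` decomposes as a product of two unbounded convex subcomplexes: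
equivalently, the hyperplanes split into two parts, each member of one part
crossing each member of the other, both factors being unbounded. -/
def ProductDecomp : Prop :=
  ∃ H₁ H₂ : Set X.H, Disjoint H₁ H₂ ∧ H₁ ∪ H₂ = Set.univ ∧
    (∀ h₁ ∈ H₁, ∀ h₂ ∈ H₂, X.Crosses h₁ h₂) ∧
    (∀ n : ℕ, ∃ x y : X.V, n ≤ ({h | X.side h x ≠ X.side h y} ∩ H₁).ncard) ∧
    (∀ n : ℕ, ∃ x y : X.V, n ≤ ({h | X.side h x ≠ X.side h y} ∩ H₂).ncard)

/-- `∂X` decomposes as the simplicial join of two disjoint nonempty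
subcomplexes: the 0-simplices split into two nonempty parts, any 0-simplex of
one part spanning a 1-simplex with any 0-simplex of the other. -/
def JoinDecomp : Prop :=
  ∃ 𝒜₁ 𝒜₂ : Set (Set X.H),
    (∀ U ∈ 𝒜₁, X.MinUBS U) ∧ (∀ U ∈ 𝒜₂, X.MinUBS U) ∧
    𝒜₁.Nonempty ∧ 𝒜₂.Nonempty ∧
    (∀ U U', U ∈ 𝒜₁ → X.MinUBS U' → X.AlmostEq U U' → U' ∈ 𝒜₁) ∧
    (∀ U U', U ∈ 𝒜₂ → X.MinUBS U' → X.AlmostEq U U' → U' ∈ 𝒜₂) ∧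
    (∀ U, X.MinUBS U → U ∈ 𝒜₁ ∨ U ∈ 𝒜₂) ∧
    (∀ U ∈ 𝒜₁, ∀ V ∈ 𝒜₂, ¬ X.AlmostEq U V) ∧
    (∀ U ∈ 𝒜₁, ∀ V ∈ 𝒜₂, ∃ W, X.IsUBS W ∧ X.FaceOf U W ∧ X.FaceOf V W)

/-! Relative versions of the hyperplane notions, for a (convex) subcomplex
with 0-cube set `S`; the hyperplanes of the subcomplex are the hyperplanes of
`X` crossing it. -/

/-- `h` crosses the subcomplex with 0-cubes `S`. -/
def CrossesSet (S : Set X.V) (h : X.H) : Prop :=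
  ∃ x ∈ S, ∃ y ∈ S, X.side h x ≠ X.side h y

def InHalfOn (S : Set X.V) (h' h : X.H) (b : Bool) : Prop :=
  h' ≠ h ∧ ∃ c : Bool, ∀ x ∈ S, X.side h x = !b → X.side h' x = c

def SepHOn (S : Set X.V) (h h₁ h₂ : X.H) : Prop :=
  X.CrossesSet S h ∧ ∃ b : Bool, X.InHalfOn S h₁ h b ∧ X.InHalfOn S h₂ h (!b)

def InseparableOn (S : Set X.V) (U : Set X.H) : Prop :=
  ∀ u ∈ U, ∀ u' ∈ U, ∀ h, X.SepHOn S h u u' → h ∈ U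

def UnidirectionalOn (S : Set X.V) (U : Set X.H) : Prop :=
  ∀ u ∈ U, ∃ b : Bool, {h | h ∈ U ∧ X.InHalfOn S h u b}.Finite

def NoFacingTripleOn (S : Set X.V) (U : Set X.H) : Prop :=
  ∀ h₁ ∈ U, ∀ h₂ ∈ U, ∀ h₃ ∈ U, ¬ (h₁ ≠ h₂ ∧ h₁ ≠ h₃ ∧ h₂ ≠ h₃ ∧
    ∃ b₁ b₂ b₃ : Bool,
      X.InHalfOn S h₂ h₁ b₁ ∧ X.InHalfOn S h₃ h₁ b₁ ∧
      X.InHalfOn S h₁ h₂ b₂ ∧ X.InHalfOn S h₃ h₂ b₂ ∧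
      X.InHalfOn S h₁ h₃ b₃ ∧ X.InHalfOn S h₂ h₃ b₃)

/-- A UBS of the subcomplex with 0-cube set `S`. -/
def IsUBSOn (S : Set X.V) (U : Set X.H) : Prop :=
  (∀ h ∈ U, X.CrossesSet S h) ∧ U.Infinite ∧ X.InseparableOn S U ∧
    X.UnidirectionalOn S U ∧ X.NoFacingTripleOn S U

def MinUBSOn (S : Set X.V) (U : Set X.H) : Prop :=
  X.IsUBSOn S U ∧ ∀ U' ⊆ U, X.IsUBSOn S U' → X.AlmostEq U U'

def FaceOfOn (S : Set X.V) (U V : Set X.H) : Prop :=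
  ∃ U' V', X.IsUBSOn S U' ∧ X.IsUBSOn S V' ∧ X.AlmostEq U U' ∧ X.AlmostEq V V' ∧ U' ⊆ V'

def HasDimOn (S : Set X.V) (U : Set X.H) (k : ℕ) : Prop :=
  ∃ 𝒰 : Fin k → Set X.H, (∀ i, X.MinUBSOn S (𝒰 i)) ∧
    (∀ i j, i ≠ j → Disjoint (𝒰 i) (𝒰 j)) ∧ X.AlmostEq U (⋃ i, 𝒰 i)

end CCC

namespace CCC

open scoped Classical

variable {X : CCC}

/-! ### Basic separation/distance lemmas -/

/-- The finite set of hyperplanes separating two 0-cubes. -/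
noncomputable def sepF (X : CCC) (x y : X.V) : Finset X.H := (X.sep_finite x y).toFinset

lemma mem_sepF {x y : X.V} {h : X.H} : h ∈ X.sepF x y ↔ X.side h x ≠ X.side h y :=
  Set.Finite.mem_toFinset _

lemma dist_def (x y : X.V) : X.dist x y = (X.sepF x y).card := rfl

lemma sepF_comm (x y : X.V) : X.sepF x y = X.sepF y x := by
  ext h; simp [mem_sepF]; tauto

lemma dist_comm (x y : X.V) : X.dist x y = X.dist y x := by
  rw [dist_def, dist_def, sepF_comm]

lemma sepF_subset_union (x y z : X.V) : X.sepF x z ⊆ X.sepF x y ∪ X.sepF y z := by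
  intro h hh
  rw [mem_sepF] at hh
  rw [Finset.mem_union, mem_sepF, mem_sepF]
  by_contra hcon
  push_neg at hcon
  exact hh (hcon.1.trans hcon.2)

lemma dist_triangle (x y z : X.V) : X.dist x z ≤ X.dist x y + X.dist y z := by
  rw [dist_def, dist_def, dist_def]
  calc (X.sepF x z).card ≤ (X.sepF x y ∪ X.sepF y z).card :=
        Finset.card_le_card (sepF_subset_union x y z)
    _ ≤ _ := Finset.card_union_le _ _

lemma eq_of_dist_eq_zero {x y : X.V} (h : X.dist x y = 0) : x = y := by
  rw [dist_def, Finset.card_eq_zero] at h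
  refine X.vertex_ext x y fun g => ?_
  by_contra hg
  exact absurd (mem_sepF.2 hg) (by simp [h])

lemma dist_pos_of_ne {x y : X.V} (h : x ≠ y) : 0 < X.dist x y := by
  rcases Nat.eq_zero_or_pos (X.dist x y) with h0 | h0
  · exact absurd (eq_of_dist_eq_zero h0) h
  · exact h0

lemma bool_ne_iff {a b : Bool} : a ≠ b ↔ a = !b := by cases a <;> cases b <;> simp

/-! ### Adjacency -/

lemma adj_of_sepF_singleton {x y : X.V} {h : X.H} (hs : X.sepF x y = {h}) : X.Adj x y := by
  refine ⟨h, ?_, fun h' hh' => ?_⟩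
  · have : h ∈ X.sepF x y := by simp [hs]
    exact mem_sepF.1 this
  · have : h' ∈ X.sepF x y := mem_sepF.2 hh'
    simpa [hs] using this

lemma sepF_singleton_of_adj {x y : X.V} (hxy : X.Adj x y) {h : X.H}
    (hh : X.side h x ≠ X.side h y) : X.sepF x y = {h} := by
  obtain ⟨g, hg, hu⟩ := hxy
  have hgh : h = g := hu h hh
  subst hgh
  ext h'
  simp only [Finset.mem_singleton, mem_sepF]
  exact ⟨fun hh' => hu h' hh', fun e => e ▸ hg⟩

lemma dist_adj {x y : X.V} (hxy : X.Adj x y) : X.dist x y = 1 := by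
  obtain ⟨g, hg, -⟩ := id hxy
  rw [dist_def, sepF_singleton_of_adj hxy hg, Finset.card_singleton]

/-! ### Flipping a single hyperplane (via `realize`) -/

lemma flip (x : X.V) (h : X.H)
    (hc : ∀ g, g ≠ h → ∃ w, X.side h w = !(X.side h x) ∧ X.side g w = X.side g x) :
    ∃ x', X.side h x' = !(X.side h x) ∧ ∀ g, g ≠ h → X.side g x' = X.side g x := by
  set o : X.H → Bool := fun g => if g = h then !(X.side h x) else X.side g x with ho
  have hcons : ∀ g g', ∃ y, X.side g y = o g ∧ X.side g' y = o g' := by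
    intro g g'
    by_cases hg : g = h <;> by_cases hg' : g' = h
    · obtain ⟨w, hw⟩ := X.halfspace_nonempty h (!(X.side h x))
      exact ⟨w, by simp [o, hg, hg', hw]⟩
    · obtain ⟨w, hw1, hw2⟩ := hc g' hg'
      exact ⟨w, by simp [o, hg, hg', hw1, hw2]⟩
    · obtain ⟨w, hw1, hw2⟩ := hc g hg
      exact ⟨w, by simp [o, hg, hg', hw1, hw2]⟩
    · exact ⟨x, by simp [o, hg, hg']⟩
  have hfin : {g : X.H | o g ≠ X.side g x}.Finite := by
    refine Set.Finite.subset (Set.finite_singleton h) fun g hg => ?_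
    by_contra hgh
    simp only [Set.mem_singleton_iff] at hgh
    simp [o, hgh] at hg
  obtain ⟨x', hx'⟩ := X.realize o x hcons hfin
  refine ⟨x', ?_, fun g hg => ?_⟩
  · have := hx' h; simpa [o] using this
  · have := hx' g; simpa [o, hg] using this

/-! ### Hyperplanes are determined by halfspaces -/

lemma wall_eq_of_halfspace_eq {h g : X.H} {bh bg : Bool}
    (he : ∀ z, X.side h z = bh ↔ X.side g z = bg) : h = g := by
  by_cases hb : bh = bg
  · subst hb
    refine X.hyp_inj h g fun z => ?_
    rcases Bool.eq_false_or_eq_true (X.side h z) with h1 | h1 <;>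
      rcases Bool.eq_false_or_eq_true (X.side g z) with h2 | h2 <;>
      rcases Bool.eq_false_or_eq_true bh with h3 | h3 <;>
      simp_all [he z]
  · have hb' : bg = !bh := by cases bh <;> cases bg <;> simp_all
    subst hb'
    refine X.hyp_inj' h g fun z => ?_
    have := he z
    rcases Bool.eq_false_or_eq_true (X.side h z) with h1 | h1 <;>
      rcases Bool.eq_false_or_eq_true (X.side g z) with h2 | h2 <;>
      rcases Bool.eq_false_or_eq_true bh with h3 | h3 <;>
      simp_all

end CCC
namespace CCC

open scoped Classical

variable {X : CCC}

lemma bool_eq_of_ne_ne {a b c : Bool} (h1 : a ≠ c) (h2 : b ≠ c) : a = b := by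
  cases a <;> cases b <;> cases c <;> simp_all

lemma adj_symm {x y : X.V} (h : X.Adj x y) : X.Adj y x := by
  obtain ⟨g, hg, hu⟩ := h
  exact ⟨g, fun e => hg e.symm, fun h' he => hu h' fun e => he e.symm⟩

lemma exists_maximal_sep {x y : X.V} {h₀ : X.H} (h0 : X.side h₀ x ≠ X.side h₀ y) :
    ∃ h, X.side h x ≠ X.side h y ∧
      ({z | X.side h₀ z = X.side h₀ y} ⊆ {z | X.side h z = X.side h y}) ∧
      ∀ g, X.side g x ≠ X.side g y →
        {z | X.side h z = X.side h y} ⊆ {z | X.side g z = X.side g y} → g = h := by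
  set s : Set X.H := {g | X.side g x ≠ X.side g y ∧
    {z | X.side h₀ z = X.side h₀ y} ⊆ {z | X.side g z = X.side g y}} with hs
  have hfin : s.Finite := (X.sep_finite x y).subset fun g hg => hg.1
  have hne : s.Nonempty := ⟨h₀, h0, subset_rfl⟩
  obtain ⟨a, ha, hmax⟩ := Set.Finite.exists_maximalFor
    (fun g => {z | X.side g z = X.side g y}) s hfin hne
  refine ⟨a, ha.1, ha.2, fun g hg hsub => ?_⟩
  have hgs : g ∈ s := ⟨hg, ha.2.trans hsub⟩
  have heq := le_antisymm hsub (hmax hgs hsub)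
  refine (wall_eq_of_halfspace_eq (bh := X.side a y) (bg := X.side g y) fun z => ?_).symm
  have hiff := Set.ext_iff.1 heq z
  simp only [Set.mem_setOf_eq] at hiff
  exact hiff

lemma flip_of_maximal {x y : X.V} {h : X.H} (hmem : X.side h x ≠ X.side h y)
    (hmax : ∀ g, X.side g x ≠ X.side g y →
      {z | X.side h z = X.side h y} ⊆ {z | X.side g z = X.side g y} → g = h) :
    ∃ x', X.side h x' = !(X.side h x) ∧ ∀ g, g ≠ h → X.side g x' = X.side g x := by
  apply flip
  intro g hg
  by_contra hno
  push_neg at hno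
  have hyx : X.side h y = !(X.side h x) := (bool_ne_iff.1 (Ne.symm hmem))
  have hgy : X.side g y ≠ X.side g x := by
    intro he
    exact hno y hyx he
  have hsub : {z | X.side h z = X.side h y} ⊆ {z | X.side g z = X.side g y} := by
    intro z hz
    simp only [Set.mem_setOf_eq] at hz ⊢
    have hzx : X.side h z = !(X.side h x) := hz.trans hyx
    have : X.side g z ≠ X.side g x := hno z hzx
    exact bool_eq_of_ne_ne this hgy
  exact hg (hmax g (Ne.symm hgy) hsub)

lemma sepF_flip {x x' : X.V} {h : X.H} (h1 : X.side h x' = !(X.side h x))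
    (h2 : ∀ g, g ≠ h → X.side g x' = X.side g x) :
    X.sepF x x' = {h} := by
  ext g
  simp only [mem_sepF, Finset.mem_singleton]
  by_cases hgh : g = h
  · subst hgh
    simp [h1]
  · simp [h2 g hgh, hgh]

lemma sepF_flip_target {x y x' : X.V} {h : X.H} (hmem : X.side h x ≠ X.side h y)
    (h1 : X.side h x' = !(X.side h x)) (h2 : ∀ g, g ≠ h → X.side g x' = X.side g x) :
    X.sepF x' y = (X.sepF x y).erase h := by
  ext g
  simp only [mem_sepF, Finset.mem_erase]
  by_cases hgh : g = h
  · subst hgh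
    have hyy : X.side g y = !(X.side g x) := bool_ne_iff.1 (Ne.symm hmem)
    simp [h1, hyy]
  · simp [h2 g hgh, hgh]

lemma step_or_below {x y : X.V} (h : X.H) (hh : X.side h x ≠ X.side h y) :
    (∃ x', X.side h x' ≠ X.side h y ∧ X.dist x' y < X.dist x y)
    ∨ (∀ g, X.side g x ≠ X.side g y →
        {z | X.side g z = X.side g y} ⊆ {z | X.side h z = X.side h y}) := by
  by_cases hb : ∀ g, X.side g x ≠ X.side g y →
      {z | X.side g z = X.side g y} ⊆ {z | X.side h z = X.side h y}
  · exact Or.inr hb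
  · left
    push_neg at hb
    obtain ⟨g, hg, hgsub⟩ := hb
    obtain ⟨m, hm1, hm2, hm3⟩ := exists_maximal_sep hg
    have hmh : m ≠ h := by
      intro he
      exact hgsub (he ▸ hm2)
    obtain ⟨x', hx'1, hx'2⟩ := flip_of_maximal hm1 hm3
    refine ⟨x', ?_, ?_⟩
    · rw [hx'2 h (Ne.symm hmh)]; exact hh
    · rw [dist_def, dist_def, sepF_flip_target hm1 hx'1 hx'2]
      exact Finset.card_erase_lt_of_mem (mem_sepF.2 hm1)

lemma carrier_nonempty (h : X.H) : ∃ x, x ∈ X.carrier h := by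
  have hP : ∃ d, ∃ x y : X.V, X.side h x ≠ X.side h y ∧ X.dist x y = d := by
    obtain ⟨x, hx⟩ := X.halfspace_nonempty h true
    obtain ⟨y, hy⟩ := X.halfspace_nonempty h false
    exact ⟨X.dist x y, x, y, by simp [hx, hy], rfl⟩
  classical
  obtain ⟨x, y, hxy, hdist⟩ := Nat.find_spec hP
  have hmin : ∀ d, d < Nat.find hP → ¬ ∃ x y : X.V, X.side h x ≠ X.side h y ∧ X.dist x y = d :=
    fun d hd => Nat.find_min hP hd
  rcases step_or_below h hxy with ⟨x', hx'1, hx'2⟩ | hbelow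
  · exact absurd ⟨x', y, hx'1, rfl⟩ (hmin _ (by omega))
  rcases step_or_below h (Ne.symm hxy) with ⟨y', hy'1, hy'2⟩ | hbelow'
  · rw [dist_comm y x] at hy'2
    exact absurd ⟨y', x, hy'1, rfl⟩ (hmin _ (by omega))
  -- both below: show dist = 1
  have hd1 : X.dist x y = 1 := by
    by_contra hne1
    have h2 : 2 ≤ X.dist x y := by
      have h0 : X.dist x y ≠ 0 := by
        intro h0
        exact hxy (congrArg (X.side h) (eq_of_dist_eq_zero h0) : _)
      omega
    -- two distinct elements in sepF x y
    rw [dist_def] at h2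
    obtain ⟨a, ha, b, hb, hab⟩ := Finset.one_lt_card.1 h2
    have hgex : ∃ g, g ∈ X.sepF x y ∧ g ≠ h := by
      by_cases hah : a = h
      · exact ⟨b, hb, fun e => hab (hah.trans e.symm)⟩
      · exact ⟨a, ha, hah⟩
    obtain ⟨g, hg, hgh⟩ := hgex
    rw [mem_sepF] at hg
    have s1 := hbelow g hg
    have s2 := hbelow' g (Ne.symm hg)
    apply hgh
    refine wall_eq_of_halfspace_eq (bh := X.side g y) (bg := X.side h y) fun z => ?_
    constructor
    · intro hz; exact s1 hz
    · intro hz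
      by_contra hzz
      have hzx : X.side g z = X.side g x := bool_eq_of_ne_ne hzz hg
      have := s2 hzx
      simp only [Set.mem_setOf_eq] at this
      rw [this] at hz
      exact hxy hz
  -- dist 1 : adjacency
  have hcard : (X.sepF x y).card = 1 := by rw [← dist_def]; exact hd1
  obtain ⟨g, hg⟩ := Finset.card_eq_one.1 hcard
  have hhg : h = g := by
    have : h ∈ X.sepF x y := mem_sepF.2 hxy
    simpa [hg] using this
  have hsing : X.sepF x y = {h} := by rw [hg, hhg]
  exact ⟨x, y, adj_of_sepF_singleton hsing, hxy⟩

lemma exists_geod : ∀ (n : ℕ) (x y : X.V), X.dist x y = n →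
    ∃ c : ℕ → X.V, c 0 = x ∧ c n = y ∧ ∀ q, q < n → X.Adj (c q) (c (q+1)) := by
  intro n
  induction n with
  | zero =>
    intro x y h0
    exact ⟨fun _ => x, rfl, (eq_of_dist_eq_zero h0), fun q hq => absurd hq (by omega)⟩
  | succ n ih =>
    intro x y hd
    have hne : x ≠ y := by
      intro he
      subst he
      have h0 : X.dist x x = 0 := by
        rw [dist_def, Finset.card_eq_zero]
        ext g; simp [mem_sepF]
      omega
    -- find first step: take any element and a maximal above it
    have hsep : ∃ g, X.side g x ≠ X.side g y := by
      by_contra hc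
      push_neg at hc
      exact hne (X.vertex_ext x y hc)
    obtain ⟨g₀, hg₀⟩ := hsep
    obtain ⟨m, hm1, _, hm3⟩ := exists_maximal_sep hg₀
    obtain ⟨x', hx'1, hx'2⟩ := flip_of_maximal hm1 hm3
    have hsx : X.sepF x' y = (X.sepF x y).erase m := sepF_flip_target hm1 hx'1 hx'2
    have hdx' : X.dist x' y = n := by
      rw [dist_def, hsx, Finset.card_erase_of_mem (mem_sepF.2 hm1), ← dist_def, hd]; rfl
    obtain ⟨c, hc0, hcn, hcadj⟩ := ih x' y hdx'
    refine ⟨fun q => if q = 0 then x else c (q - 1), by simp, by have hss : n + 1 - 1 = n := rfl; simp [hss, hcn], ?_⟩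
    intro q hq
    by_cases hq0 : q = 0
    · subst hq0
      simp only [if_pos rfl, if_neg (by omega : ¬ (0+1 = 0))]
      simp only [Nat.add_sub_cancel, hc0]
      exact adj_of_sepF_singleton (sepF_flip hx'1 hx'2)
    · simp only [if_neg hq0, if_neg (by omega : ¬ (q+1 = 0))]
      have : q - 1 + 1 = q := by omega
      have h2 : q + 1 - 1 = q - 1 + 1 := by omega
      rw [h2]
      exact hcadj (q-1) (by omega)

lemma exists_cross {c : ℕ → X.V} {n : ℕ} {h : X.H}
    (hd : X.side h (c 0) ≠ X.side h (c n)) :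
    ∃ q, q < n ∧ X.side h (c q) ≠ X.side h (c (q+1)) := by
  by_contra hc
  push_neg at hc
  have : ∀ m, m ≤ n → X.side h (c m) = X.side h (c 0) := by
    intro m
    induction m with
    | zero => intro _; rfl
    | succ m ih =>
      intro hm
      rw [← hc m (by omega)]
      exact ih (by omega)
  exact hd (this n le_rfl).symm

lemma dist_chain_le {c : ℕ → X.V} {n : ℕ} (hadj : ∀ q, q < n → X.Adj (c q) (c (q+1))) :
    ∀ q, q ≤ n → X.dist (c 0) (c q) ≤ q := by
  intro q
  induction q with
  | zero =>
    intro _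
    have : X.dist (c 0) (c 0) = 0 := by
      rw [dist_def, Finset.card_eq_zero]; ext g; simp [mem_sepF]
    omega
  | succ q ih =>
    intro hq
    calc X.dist (c 0) (c (q+1)) ≤ X.dist (c 0) (c q) + X.dist (c q) (c (q+1)) :=
          dist_triangle _ _ _
      _ ≤ q + 1 := by
          have := dist_adj (hadj q (by omega))
          have hih := ih (by omega)
          omega

end CCC
namespace CCC

open scoped Classical

variable {X : CCC}

lemma contact_symm {a b : X.H} (h : X.Contact a b) : X.Contact b a := by
  obtain ⟨hne, hsep⟩ := h
  refine ⟨Ne.symm hne, ?_⟩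
  rintro ⟨h'', b₀, hi1, hi2⟩
  exact hsep ⟨h'', !b₀, hi2, by simpa using hi1⟩

/-- Lemma E: a hyperplane separating two 0-cubes of the carrier of `c`
contacts `c`. -/
lemma contact_of_carrier {c hh : X.H} {x y : X.V} (hx : x ∈ X.carrier c) (hy : y ∈ X.carrier c)
    (hs : X.side hh x ≠ X.side hh y) (hne : hh ≠ c) : X.Contact hh c := by
  refine ⟨hne, ?_⟩
  rintro ⟨h'', b, ⟨hne1, c₁, hc₁⟩, ⟨hne2, c₂, hc₂⟩⟩
  have hc₂' : ∀ z, X.side h'' z = b → X.side c z = c₂ := by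
    intro z hz; exact hc₂ z (by simpa using hz)
  have hkey : ∀ z, z ∈ X.carrier c → X.side h'' z ≠ b := by
    rintro z ⟨z', hadj, hzc⟩ hzb
    have hsep : X.sepF z z' = {c} := sepF_singleton_of_adj hadj hzc
    have hz' : X.side h'' z' = b := by
      by_contra hbb
      have hmem : h'' ∈ X.sepF z z' := mem_sepF.2
        (show X.side h'' z ≠ X.side h'' z' by rw [hzb]; exact fun e => hbb e.symm)
      rw [hsep] at hmem
      have hcc : h'' = c := by simpa using hmem
      exact hne2 hcc.symm
    exact hzc ((hc₂' z hzb).trans (hc₂' z' hz').symm)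
  have hxh : X.side h'' x = !b := by
    have h1 := hkey x hx; cases hb : X.side h'' x <;> cases b <;> simp_all
  have hyh : X.side h'' y = !b := by
    have h1 := hkey y hy; cases hb : X.side h'' y <;> cases b <;> simp_all
  exact hs ((hc₁ x hxh).trans (hc₁ y hyh).symm)

/-- If the flip of `x` across a maximal separator `h` of a minimal pair of
carrier points is obstructed, then `a` is constant on the `y`-halfspace of `h`. -/
lemma obstruction_lemma {a b : X.H} {x y x' : X.V}
    (hxx' : X.Adj x x') (hax : X.side a x ≠ X.side a x')
    (hyb : y ∈ X.carrier b)
    (hmin : ∀ x₁ y₁ : X.V, x₁ ∈ X.carrier a → y₁ ∈ X.carrier b → X.dist x y ≤ X.dist x₁ y₁)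
    (hanot : X.side a x = X.side a y)
    {h : X.H} (hmem : X.side h x ≠ X.side h y)
    (hmax : ∀ g, X.side g x ≠ X.side g y →
       {z | X.side h z = X.side h y} ⊆ {z | X.side g z = X.side g y} → g = h) :
    ∀ z, X.side h z = X.side h y → X.side a z = X.side a x := by
  by_contra hobs
  push_neg at hobs
  obtain ⟨z₀, hz₀1, hz₀2⟩ := hobs
  -- facts about the dual edge of a at x
  have hsxx' : X.sepF x x' = {a} := sepF_singleton_of_adj hxx' hax
  have hax1 : X.side a x' = !(X.side a x) := bool_ne_iff.1 (Ne.symm hax)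
  have hax2 : ∀ g, g ≠ a → X.side g x' = X.side g x := by
    intro g hg
    by_contra hgg
    have hmem' : g ∈ X.sepF x x' := mem_sepF.2 fun e => hgg e.symm
    rw [hsxx'] at hmem'
    exact hg (by simpa using hmem')
  have hha : h ≠ a := by
    intro he; rw [he] at hmem; exact hmem hanot
  -- flip x across h
  obtain ⟨x₁, hx11, hx12⟩ := flip_of_maximal hmem hmax
  -- flip x' across h
  have hyx : X.side h y = !(X.side h x) := bool_ne_iff.1 (Ne.symm hmem)
  obtain ⟨x₁', hx21, hx22⟩ := flip x' h (by
    intro g hg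
    have hhx' : X.side h x' = X.side h x := hax2 h hha
    rw [hhx']
    by_cases hga : g = a
    · subst hga
      refine ⟨z₀, by rw [hz₀1, hyx], ?_⟩
      rw [hax1]
      exact bool_ne_iff.1 hz₀2
    · rw [hax2 g hga]
      by_cases hgs : X.side g x = X.side g y
      · exact ⟨y, by rw [hyx], hgs.symm⟩
      · by_contra hno
        push_neg at hno
        have hsub : {z | X.side h z = X.side h y} ⊆ {z | X.side g z = X.side g y} := by
          intro z hz
          simp only [Set.mem_setOf_eq] at hz ⊢
          have h1 : X.side h z = !(X.side h x) := hz.trans hyx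
          have h2 := hno z h1
          exact bool_eq_of_ne_ne h2 (fun e => hgs e.symm)
        exact hg (hmax g hgs hsub))
  -- x₁ and x₁' form a dual edge of a
  have hx1a : X.side a x₁ = X.side a x := hx12 a (Ne.symm hha)
  have hx1'a : X.side a x₁' = !(X.side a x) := by
    rw [hx22 a (Ne.symm hha), hax1]
  have hsep1 : X.sepF x₁ x₁' = {a} := by
    ext g
    simp only [mem_sepF, Finset.mem_singleton]
    by_cases hga : g = a
    · subst hga
      rw [hx1a, hx1'a]
      simp
    · simp only [hga, iff_false]
      by_cases hgh : g = h
      · subst hgh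
        rw [hx11, hx21, hax2 g hha]
        simp
      · rw [hx12 g hgh, hx22 g hgh, hax2 g hga]
        simp
  have hx₁carrier : x₁ ∈ X.carrier a := by
    refine ⟨x₁', adj_of_sepF_singleton hsep1, ?_⟩
    rw [hx1a, hx1'a]
    simp
  -- dist x₁ y < dist x y
  have hsx₁y : X.sepF x₁ y = (X.sepF x y).erase h := sepF_flip_target hmem hx11 hx12
  have hlt : X.dist x₁ y < X.dist x y := by
    rw [dist_def, dist_def, hsx₁y]
    exact Finset.card_erase_lt_of_mem (mem_sepF.2 hmem)
  exact absurd (hmin x₁ y hx₁carrier hyb) (by omega)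

/-- Lemma F: carriers of contacting hyperplanes intersect. -/
lemma carriers_meet {a b : X.H} (hab : X.Contact a b) :
    ∃ w, w ∈ X.carrier a ∧ w ∈ X.carrier b := by
  classical
  have hP : ∃ d, ∃ x y : X.V, x ∈ X.carrier a ∧ y ∈ X.carrier b ∧ X.dist x y = d := by
    obtain ⟨x, hx⟩ := carrier_nonempty (X := X) a
    obtain ⟨y, hy⟩ := carrier_nonempty (X := X) b
    exact ⟨_, x, y, hx, hy, rfl⟩
  obtain ⟨x, y, hxa, hyb, hdist⟩ := Nat.find_spec hP
  have hmin : ∀ x₁ y₁ : X.V, x₁ ∈ X.carrier a → y₁ ∈ X.carrier b →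
      X.dist x y ≤ X.dist x₁ y₁ := by
    intro x₁ y₁ h1 h2
    rw [hdist]
    exact Nat.find_min' hP ⟨x₁, y₁, h1, h2, rfl⟩
  by_cases hd0 : X.dist x y = 0
  · have := eq_of_dist_eq_zero hd0
    subst this
    exact ⟨x, hxa, hyb⟩
  -- neighbors across a and b
  obtain ⟨x', hxx', hax⟩ := hxa
  obtain ⟨y', hyy', hby⟩ := hyb
  have hxa' : x ∈ X.carrier a := ⟨x', hxx', hax⟩
  have hyb' : y ∈ X.carrier b := ⟨y', hyy', hby⟩
  -- a and b do not separate x from y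
  have hanot : X.side a x = X.side a y := by
    by_contra hasep
    have hsxx' : X.sepF x x' = {a} := sepF_singleton_of_adj hxx' hax
    have hax1 : X.side a x' = !(X.side a x) := bool_ne_iff.1 (Ne.symm hax)
    have hax2 : ∀ g, g ≠ a → X.side g x' = X.side g x := by
      intro g hg
      by_contra hgg
      have hmem' : g ∈ X.sepF x x' := mem_sepF.2 fun e => hgg e.symm
      rw [hsxx'] at hmem'
      exact hg (by simpa using hmem')
    have hsx'y : X.sepF x' y = (X.sepF x y).erase a := sepF_flip_target hasep hax1 hax2
    have hx'a : x' ∈ X.carrier a := ⟨x, adj_symm hxx', Ne.symm hax⟩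
    have hlt : X.dist x' y < X.dist x y := by
      rw [dist_def, dist_def, hsx'y]
      exact Finset.card_erase_lt_of_mem (mem_sepF.2 hasep)
    exact absurd (hmin x' y hx'a hyb') (by omega)
  have hbnot : X.side b x = X.side b y := by
    by_contra hbsep
    have hsyy' : X.sepF y y' = {b} := sepF_singleton_of_adj hyy' hby
    have hby1 : X.side b y' = !(X.side b y) := bool_ne_iff.1 (Ne.symm hby)
    have hby2 : ∀ g, g ≠ b → X.side g y' = X.side g y := by
      intro g hg
      by_contra hgg
      have hmem' : g ∈ X.sepF y y' := mem_sepF.2 fun e => hgg e.symm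
      rw [hsyy'] at hmem'
      exact hg (by simpa using hmem')
    have hsy'x : X.sepF y' x = (X.sepF y x).erase b :=
      sepF_flip_target (fun e => hbsep e.symm) hby1 hby2
    have hy'b : y' ∈ X.carrier b := ⟨y, adj_symm hyy', Ne.symm hby⟩
    have hlt : X.dist x y' < X.dist x y := by
      rw [dist_comm x y', dist_comm x y, dist_def, dist_def, hsy'x]
      exact Finset.card_erase_lt_of_mem (mem_sepF.2 fun e => hbsep e.symm)
    exact absurd (hmin x y' hxa' ⟨y, adj_symm hyy', Ne.symm hby⟩) (by omega)
  -- pick a separator and maximal elements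
  have hsepne : ∃ g₀, X.side g₀ x ≠ X.side g₀ y := by
    by_contra hc
    push_neg at hc
    exact hd0 (by rw [dist_def, Finset.card_eq_zero]; ext g; simp [mem_sepF, hc g])
  obtain ⟨g₀, hg₀⟩ := hsepne
  obtain ⟨h, hh1, _, hh3⟩ := exists_maximal_sep hg₀
  -- maximal over h in the x-direction
  obtain ⟨hs, hs1, hs2, hs3⟩ := exists_maximal_sep (x := y) (y := x) (Ne.symm hh1)
  -- obstruction facts
  have obs_a : ∀ z, X.side h z = X.side h y → X.side a z = X.side a x :=
    obstruction_lemma hxx' hax hyb' hmin hanot hh1 hh3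
  have hmin' : ∀ x₁ y₁ : X.V, x₁ ∈ X.carrier b → y₁ ∈ X.carrier a →
      X.dist y x ≤ X.dist x₁ y₁ := by
    intro x₁ y₁ h1 h2
    rw [dist_comm y x, dist_comm x₁ y₁]
    exact hmin y₁ x₁ h2 h1
  have obs_b : ∀ z, X.side hs z = X.side hs x → X.side b z = X.side b y :=
    obstruction_lemma hyy' hby hxa' hmin' hbnot.symm hs1 hs3
  -- h* := hs is also obstructed for a
  have obs_a' : ∀ z, X.side hs z = X.side hs y → X.side a z = X.side a x := by
    intro z hz
    apply obs_a
    by_contra hzz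
    have hzx : X.side h z = X.side h x := bool_eq_of_ne_ne hzz hh1
    have hmem2 := hs2 (show z ∈ {w | X.side h w = X.side h x} from hzx)
    simp only [Set.mem_setOf_eq] at hmem2
    rw [hmem2] at hz
    exact hs1 (hz.symm ▸ rfl)
  -- build a separation of a and b by hs
  have hane : a ≠ hs := by
    intro he
    rw [he] at hanot
    exact hs1 hanot.symm
  have hbne : b ≠ hs := by
    intro he
    rw [he] at hbnot
    exact hs1 hbnot.symm
  have hyx : X.side hs y = !(X.side hs x) := bool_ne_iff.1 hs1
  refine absurd (?_ : ∃ h'', X.SepH h'' a b) hab.2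
  refine ⟨hs, X.side hs x, ⟨hane, X.side a x, ?_⟩, ⟨hbne, X.side b y, ?_⟩⟩
  · intro z hz
    exact obs_a' z (hz.trans hyx.symm)
  · intro z hz
    simp only [Bool.not_not] at hz
    exact obs_b z hz
end CCC
namespace CCC

open scoped Classical

variable {X : CCC}

lemma bool_med_sep1 (m a b c : Bool) (h : (m=a∧m=b)∨(m=a∧m=c)∨(m=b∧m=c)) :
    (b ≠ m) ↔ (b ≠ a ∧ b ≠ c) := by
  revert h; cases m <;> cases a <;> cases b <;> cases c <;> decide

lemma bool_med_sep2 (m a b c : Bool) (h : (m=a∧m=b)∨(m=a∧m=c)∨(m=b∧m=c)) :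
    (c ≠ m) ↔ (c ≠ a ∧ c ≠ b) := by
  revert h; cases m <;> cases a <;> cases b <;> cases c <;> decide

lemma bool_med_sep3 (m a b c : Bool) (h : (m=a∧m=b)∨(m=a∧m=c)∨(m=b∧m=c)) :
    (a ≠ m) ↔ (a ≠ b ∧ a ≠ c) := by
  revert h; cases m <;> cases a <;> cases b <;> cases c <;> decide

lemma bool_split (a b c : Bool) (h : b ≠ c) : (b ≠ a ∧ b ≠ c) ∨ (c ≠ a ∧ c ≠ b) := by
  revert h; cases a <;> cases b <;> cases c <;> decide

lemma bool_split' (a b c : Bool) : ¬((b ≠ a ∧ b ≠ c) ∧ (c ≠ a ∧ c ≠ b)) := by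
  cases a <;> cases b <;> cases c <;> decide

lemma sep_disjoint_of_add {x y z : X.V} (hadd : X.dist x z + X.dist z y = X.dist x y) :
    ∀ g, ¬(g ∈ X.sepF x z ∧ g ∈ X.sepF z y) := by
  have hsub : X.sepF x y ⊆ X.sepF x z ∪ X.sepF z y := sepF_subset_union x z y
  have hcard := Finset.card_union_add_card_inter (X.sepF x z) (X.sepF z y)
  have hle : (X.sepF x y).card ≤ (X.sepF x z ∪ X.sepF z y).card := Finset.card_le_card hsub
  rw [dist_def, dist_def, dist_def] at hadd
  have hint : (X.sepF x z ∩ X.sepF z y).card = 0 := by omega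
  rw [Finset.card_eq_zero] at hint
  intro g hg
  have hmem : g ∈ X.sepF x z ∩ X.sepF z y := Finset.mem_inter.2 hg
  rw [hint] at hmem
  simp at hmem

/-- Carriers are convex. -/
lemma carrier_convex {c : X.H} {x y z : X.V} (hx : x ∈ X.carrier c) (hy : y ∈ X.carrier c)
    (hadd : X.dist x z + X.dist z y = X.dist x y) : z ∈ X.carrier c := by
  obtain ⟨x', hxx', hcx⟩ := hx
  obtain ⟨y', hyy', hcy⟩ := hy
  have hdisj := sep_disjoint_of_add hadd
  have hsx : X.sepF x x' = {c} := sepF_singleton_of_adj hxx' hcx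
  have hsy : X.sepF y y' = {c} := sepF_singleton_of_adj hyy' hcy
  have hx1 : X.side c x' = !(X.side c x) := bool_ne_iff.1 (Ne.symm hcx)
  have hy1 : X.side c y' = !(X.side c y) := bool_ne_iff.1 (Ne.symm hcy)
  have hx2 : ∀ g, g ≠ c → X.side g x' = X.side g x := by
    intro g hg
    by_contra hgg
    have hmem' : g ∈ X.sepF x x' := mem_sepF.2 fun e => hgg e.symm
    rw [hsx] at hmem'
    exact hg (by simpa using hmem')
  have hy2 : ∀ g, g ≠ c → X.side g y' = X.side g y := by
    intro g hg
    by_contra hgg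
    have hmem' : g ∈ X.sepF y y' := mem_sepF.2 fun e => hgg e.symm
    rw [hsy] at hmem'
    exact hg (by simpa using hmem')
  obtain ⟨z', h1, h2⟩ := flip z c (by
    intro g hg
    by_cases hc1 : X.side c z = X.side c x
    · by_cases hg1 : X.side g z = X.side g x
      · exact ⟨x', by rw [hx1, hc1], by rw [hx2 g hg, hg1]⟩
      · have hgzy : X.side g z = X.side g y := by
          by_contra hgy
          exact hdisj g ⟨mem_sepF.2 fun e => hg1 e.symm, mem_sepF.2 hgy⟩
        by_cases hc2 : X.side c z = X.side c y
        · exact ⟨y', by rw [hy1, hc2], by rw [hy2 g hg, hgzy]⟩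
        · exact ⟨y, bool_ne_iff.1 (fun e => hc2 e.symm), hgzy.symm⟩
    · have hczy : X.side c z = X.side c y := by
        by_contra hcy2
        exact hdisj c ⟨mem_sepF.2 fun e => hc1 e.symm, mem_sepF.2 hcy2⟩
      by_cases hg1 : X.side g z = X.side g x
      · exact ⟨x, bool_ne_iff.1 (fun e => hc1 e.symm), hg1.symm⟩
      · have hgzy : X.side g z = X.side g y := by
          by_contra hgy
          exact hdisj g ⟨mem_sepF.2 fun e => hg1 e.symm, mem_sepF.2 hgy⟩
        exact ⟨y', by rw [hy1, hczy], by rw [hy2 g hg, hgzy]⟩)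
  refine ⟨z', adj_of_sepF_singleton (sepF_flip h1 h2), ?_⟩
  rw [h1]
  simp

/-- Medians exist. -/
lemma exists_median (x y z : X.V) :
    ∃ m : X.V, ∀ g : X.H,
      (X.side g m = X.side g x ∧ X.side g m = X.side g y) ∨
      (X.side g m = X.side g x ∧ X.side g m = X.side g z) ∨
      (X.side g m = X.side g y ∧ X.side g m = X.side g z) := by
  set o : X.H → Bool := fun g => if X.side g x = X.side g y then X.side g x else X.side g z
    with ho
  have hcons : ∀ g h, ∃ w, X.side g w = o g ∧ X.side h w = o h := by
    intro g h
    by_cases hg : X.side g x = X.side g y <;> by_cases hh : X.side h x = X.side h y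
    · exact ⟨x, by simp [o, hg, hh]⟩
    · by_cases hzx : X.side h z = X.side h x
      · exact ⟨x, by simp only [o, if_pos hg], by simp only [o, if_neg hh]; exact hzx.symm⟩
      · have hzy : X.side h z = X.side h y := bool_eq_of_ne_ne hzx (fun e => hh e.symm)
        exact ⟨y, by simp only [o, if_pos hg]; exact hg.symm,
          by simp only [o, if_neg hh]; exact hzy.symm⟩
    · by_cases hzx : X.side g z = X.side g x
      · exact ⟨x, by simp only [o, if_neg hg]; exact hzx.symm, by simp only [o, if_pos hh]⟩
      · have hzy : X.side g z = X.side g y := bool_eq_of_ne_ne hzx (fun e => hg e.symm)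
        exact ⟨y, by simp only [o, if_neg hg]; exact hzy.symm,
          by simp only [o, if_pos hh]; exact hh.symm⟩
    · exact ⟨z, by simp [o, hg, hh]⟩
  have hfin : {g : X.H | o g ≠ X.side g x}.Finite := by
    refine (X.sep_finite x z).subset fun g hg => ?_
    simp only [Set.mem_setOf_eq] at hg ⊢
    by_cases he : X.side g x = X.side g y
    · simp [o, he] at hg
    · simp only [o, if_neg he] at hg
      exact fun e => hg e.symm
  obtain ⟨m, hm⟩ := X.realize o x hcons hfin
  refine ⟨m, fun g => ?_⟩
  by_cases he : X.side g x = X.side g y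
  · have h1 : X.side g m = X.side g x := by rw [hm g]; simp [o, he]
    exact Or.inl ⟨h1, h1.trans he⟩
  · have h1 : X.side g m = X.side g z := by rw [hm g]; simp [o, he]
    by_cases hzx : X.side g z = X.side g x
    · exact Or.inr (Or.inl ⟨h1.trans hzx, h1⟩)
    · have hzy : X.side g z = X.side g y := bool_eq_of_ne_ne hzx (fun e => he e.symm)
      exact Or.inr (Or.inr ⟨h1.trans hzy, h1⟩)

/-- The distance from a 0-cube to the carrier of a hyperplane. -/
noncomputable def distC (X : CCC) (z : X.V) (c : X.H) : ℕ :=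
  sInf {d | ∃ w, w ∈ X.carrier c ∧ X.dist z w = d}

lemma distC_spec (z : X.V) (c : X.H) :
    ∃ w, w ∈ X.carrier c ∧ X.dist z w = X.distC z c := by
  have hne : {d | ∃ w, w ∈ X.carrier c ∧ X.dist z w = d}.Nonempty := by
    obtain ⟨w, hw⟩ := carrier_nonempty (X := X) c
    exact ⟨X.dist z w, w, hw, rfl⟩
  obtain ⟨w, hw, hd⟩ := Nat.sInf_mem hne
  exact ⟨w, hw, hd⟩

lemma distC_le {z : X.V} {c : X.H} {w : X.V} (hw : w ∈ X.carrier c) :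
    X.distC z c ≤ X.dist z w :=
  Nat.sInf_le ⟨w, hw, rfl⟩

/-- Gates: nearest-point projections to carriers. -/
lemma exists_gate (z : X.V) (c : X.H) :
    ∃ g, g ∈ X.carrier c ∧ X.dist z g = X.distC z c ∧
      ∀ u, X.side u z ≠ X.side u g → ∀ w ∈ X.carrier c, X.side u w = X.side u g := by
  obtain ⟨g, hgc, hgd⟩ := distC_spec z c
  refine ⟨g, hgc, hgd, ?_⟩
  by_contra hcon
  push_neg at hcon
  obtain ⟨u, hu, w, hwc, hwu⟩ := hcon
  obtain ⟨m, hmed⟩ := exists_median z g w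
  have e1 : X.sepF g m = X.sepF g z ∩ X.sepF g w := by
    ext v
    simp only [Finset.mem_inter, mem_sepF]
    exact bool_med_sep1 (X.side v m) (X.side v z) (X.side v g) (X.side v w) (hmed v)
  have e2 : X.sepF w m = X.sepF w z ∩ X.sepF w g := by
    ext v
    simp only [Finset.mem_inter, mem_sepF]
    exact bool_med_sep2 (X.side v m) (X.side v z) (X.side v g) (X.side v w) (hmed v)
  have e3 : X.sepF g w = (X.sepF g z ∩ X.sepF g w) ∪ (X.sepF w z ∩ X.sepF w g) := by
    ext v
    simp only [Finset.mem_union, Finset.mem_inter, mem_sepF]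
    constructor
    · intro hv
      exact bool_split (X.side v z) (X.side v g) (X.side v w) hv
    · rintro (⟨h1, h2⟩ | ⟨h1, h2⟩)
      · exact h2
      · exact fun e => h2 e.symm
  have e4 : Disjoint (X.sepF g z ∩ X.sepF g w) (X.sepF w z ∩ X.sepF w g) := by
    rw [Finset.disjoint_left]
    intro v hv1 hv2
    rw [Finset.mem_inter, mem_sepF, mem_sepF] at hv1 hv2
    exact bool_split' (X.side v z) (X.side v g) (X.side v w) ⟨hv1, hv2⟩
  have hadd : X.dist g m + X.dist m w = X.dist g w := by
    have hcw : X.dist m w = (X.sepF w m).card := by rw [dist_comm, dist_def]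
    calc X.dist g m + X.dist m w
        = (X.sepF g z ∩ X.sepF g w).card + (X.sepF w z ∩ X.sepF w g).card := by
          rw [hcw, e2, dist_def g m, e1]
      _ = (X.sepF g w).card := by
          conv_rhs => rw [e3]
          exact (Finset.card_union_of_disjoint e4).symm
      _ = X.dist g w := (dist_def g w).symm
  have hmc : m ∈ X.carrier c := carrier_convex hgc hwc hadd
  -- sep z m ⊊ sep z g
  have hsub : X.sepF z m ⊆ X.sepF z g := by
    intro v hv
    rw [mem_sepF] at hv ⊢
    exact ((bool_med_sep3 (X.side v m) (X.side v z) (X.side v g) (X.side v w) (hmed v)).1 hv).1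
  have humem : u ∈ X.sepF z g := mem_sepF.2 hu
  have hunot : u ∉ X.sepF z m := by
    rw [mem_sepF]
    intro hv
    have h3 := (bool_med_sep3 (X.side u m) (X.side u z) (X.side u g) (X.side u w) (hmed u)).1 hv
    have : X.side u z = X.side u w := bool_eq_of_ne_ne hu hwu
    exact h3.2 this
  have hlt : X.dist z m < X.dist z g := by
    rw [dist_def, dist_def]
    exact Finset.card_lt_card ⟨hsub, fun hsup => hunot (hsup humem)⟩
  have := distC_le (z := z) hmc
  omega

/-- The set of hyperplanes separating `z` from the whole carrier of `c`. -/
def sepCset (X : CCC) (z : X.V) (c : X.H) : Set X.H :=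
  {u | ∀ w ∈ X.carrier c, X.side u w ≠ X.side u z}

lemma gate_full (z : X.V) (c : X.H) :
    ∃ g, g ∈ X.carrier c ∧ X.dist z g = X.distC z c ∧
      X.sepCset z c = (X.sepF z g : Set X.H) := by
  obtain ⟨g, hgc, hgd, hgate⟩ := exists_gate z c
  refine ⟨g, hgc, hgd, ?_⟩
  ext u
  simp only [sepCset, Set.mem_setOf_eq, Finset.coe_sort_coe, Finset.mem_coe, mem_sepF]
  constructor
  · intro hus
    exact fun e => hus g hgc e.symm
  · intro hus w hw
    rw [hgate u hus w hw]
    exact fun e => hus e.symm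
  
lemma sepCset_finite (z : X.V) (c : X.H) : (X.sepCset z c).Finite := by
  obtain ⟨g, _, _, he⟩ := gate_full z c
  rw [he]
  exact (X.sepF z g).finite_toSet

lemma distC_eq_ncard (z : X.V) (c : X.H) : X.distC z c = (X.sepCset z c).ncard := by
  obtain ⟨g, _, hgd, he⟩ := gate_full z c
  rw [he, Set.ncard_coe_finset, ← dist_def, hgd]

lemma distC_between {x y z : X.V} {c : X.H} (hadd : X.dist x z + X.dist z y = X.dist x y) :
    X.distC z c ≤ X.distC x c + X.distC y c := by
  obtain ⟨gz, hgzc, hgzd, hez⟩ := gate_full z c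
  obtain ⟨gx, hgxc, hgxd, hex⟩ := gate_full x c
  obtain ⟨gy, hgyc, hgyd, hey⟩ := gate_full y c
  have hdisj := sep_disjoint_of_add hadd
  have hsub : X.sepF z gz ⊆ X.sepF x gx ∪ X.sepF y gy := by
    intro u hu
    have huz : u ∈ X.sepCset z c := by rw [hez]; exact hu
    rcases Classical.em (u ∈ X.sepF x z) with hxz | hxz
    · -- then u ∉ sep z y: side u y = side u z, so u separates y from the carrier
      have hzy : X.side u z = X.side u y := by
        by_contra hzy
        exact hdisj u ⟨hxz, mem_sepF.2 hzy⟩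
      have : u ∈ X.sepCset y c := by
        intro w hw
        rw [← hzy]
        exact huz w hw
      rw [hey] at this
      exact Finset.mem_union_right _ this
    · rw [mem_sepF] at hxz
      push_neg at hxz
      have : u ∈ X.sepCset x c := by
        intro w hw
        rw [hxz]
        exact huz w hw
      rw [hex] at this
      exact Finset.mem_union_left _ this
  calc X.distC z c = (X.sepF z gz).card := by rw [← hgzd, dist_def]
    _ ≤ (X.sepF x gx ∪ X.sepF y gy).card := Finset.card_le_card hsub
    _ ≤ (X.sepF x gx).card + (X.sepF y gy).card := Finset.card_union_le _ _
    _ = X.distC x c + X.distC y c := by rw [← dist_def, ← dist_def, hgxd, hgyd]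

end CCC
namespace CCC

open scoped Classical

variable {X : CCC} {γ : ℕ → X.V} {Hd : ℕ → X.H}

section Ray

variable (hγ : X.IsGeodesicRay γ)
  (hHd : ∀ i, X.side (Hd i) (γ i) ≠ X.side (Hd i) (γ (i + 1)))

include hγ hHd

lemma sep_step (i : ℕ) : X.sepF (γ i) (γ (i+1)) = {Hd i} := by
  have hd1 : X.dist (γ i) (γ (i+1)) = 1 := by
    rw [hγ i (i+1) (by omega)]
    omega
  rw [dist_def] at hd1
  obtain ⟨a, ha⟩ := Finset.card_eq_one.1 hd1
  have hmem : Hd i ∈ X.sepF (γ i) (γ (i+1)) := mem_sepF.2 (hHd i)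
  rw [ha] at hmem
  rw [ha, Finset.mem_singleton.1 hmem]

lemma sepF_ray_eq {m n : ℕ} (hmn : m ≤ n) :
    X.sepF (γ m) (γ n) = (Finset.Ico m n).image Hd := by
  have hsub : X.sepF (γ m) (γ n) ⊆ (Finset.Ico m n).image Hd := by
    intro h hh
    rw [mem_sepF] at hh
    have hcross : ∃ q, q < n - m ∧
        X.side h ((fun q => γ (m + q)) q) ≠ X.side h ((fun q => γ (m + q)) (q+1)) := by
      apply exists_cross
      show X.side h (γ (m + 0)) ≠ X.side h (γ (m + (n - m)))
      rw [Nat.add_zero, Nat.add_sub_cancel' hmn]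
      exact hh
    obtain ⟨q, hq, hqs⟩ := hcross
    have : h ∈ X.sepF (γ (m+q)) (γ (m+q+1)) := mem_sepF.2 hqs
    rw [sep_step hγ hHd (m+q)] at this
    rw [Finset.mem_singleton.1 this]
    exact Finset.mem_image_of_mem Hd (Finset.mem_Ico.2 ⟨by omega, by omega⟩)
  have hcard : (X.sepF (γ m) (γ n)).card = n - m := by
    rw [← dist_def]
    exact hγ m n hmn
  refine Finset.eq_of_subset_of_card_le hsub ?_
  calc ((Finset.Ico m n).image Hd).card ≤ (Finset.Ico m n).card := Finset.card_image_le
    _ = n - m := Nat.card_Ico m n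
    _ = (X.sepF (γ m) (γ n)).card := hcard.symm

lemma Hd_inj : Function.Injective Hd := by
  intro i j hij
  by_contra hne
  set N := max i j + 1 with hN
  have hinj : Set.InjOn Hd (Finset.Ico 0 N) := by
    rw [← Finset.card_image_iff]
    rw [← sepF_ray_eq hγ hHd (by omega : 0 ≤ N), ← dist_def, hγ 0 N (by omega),
      Nat.card_Ico]
  exact hne (hinj (by simp [hN]) (by simp [hN]) hij)

lemma side_Hd_left {k m : ℕ} (hm : m ≤ k) : X.side (Hd k) (γ m) = X.side (Hd k) (γ k) := by
  by_contra hne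
  have : Hd k ∈ X.sepF (γ m) (γ k) := mem_sepF.2 hne
  rw [sepF_ray_eq hγ hHd hm] at this
  obtain ⟨i, hi, hie⟩ := Finset.mem_image.1 this
  rw [Finset.mem_Ico] at hi
  have := Hd_inj hγ hHd hie
  omega

lemma side_Hd_right {k m : ℕ} (hm : k < m) :
    X.side (Hd k) (γ m) = X.side (Hd k) (γ (k+1)) := by
  by_contra hne
  have : Hd k ∈ X.sepF (γ (k+1)) (γ m) := mem_sepF.2 fun e => hne e.symm
  rw [sepF_ray_eq hγ hHd (by omega : k + 1 ≤ m)] at this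
  obtain ⟨i, hi, hie⟩ := Finset.mem_image.1 this
  rw [Finset.mem_Ico] at hi
  have := Hd_inj hγ hHd hie
  omega

lemma side_Hd_ne {k k₁ k₂ : ℕ} (h1 : k₁ ≤ k) (h2 : k < k₂) :
    X.side (Hd k) (γ k₁) ≠ X.side (Hd k) (γ k₂) := by
  rw [side_Hd_left hγ hHd h1, side_Hd_right hγ hHd h2]
  exact hHd k

lemma mem_WSet_iff {h : X.H} : h ∈ X.WSet γ ↔ ∃ n, h = Hd n := by
  constructor
  · rintro ⟨n, hn⟩
    have : h ∈ X.sepF (γ n) (γ (n+1)) := mem_sepF.2 hn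
    rw [sep_step hγ hHd n] at this
    exact ⟨n, Finset.mem_singleton.1 this⟩
  · rintro ⟨n, rfl⟩
    exact ⟨n, hHd n⟩

lemma Hd_mem_WSet (n : ℕ) : Hd n ∈ X.WSet γ := ⟨n, hHd n⟩

lemma not_WSet_const {h : X.H} (hnw : h ∉ X.WSet γ) (m n : ℕ) :
    X.side h (γ m) = X.side h (γ n) := by
  have key : ∀ a b : ℕ, a ≤ b → X.side h (γ a) = X.side h (γ b) := by
    intro a b hab
    by_contra hne
    have hcross : ∃ q, q < b - a ∧
        X.side h ((fun q => γ (a + q)) q) ≠ X.side h ((fun q => γ (a + q)) (q+1)) := by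
      apply exists_cross
      show X.side h (γ (a + 0)) ≠ X.side h (γ (a + (b - a)))
      rw [Nat.add_zero, Nat.add_sub_cancel' hab]
      exact hne
    obtain ⟨q, _, hqs⟩ := hcross
    exact hnw ⟨a + q, hqs⟩
  rcases le_total m n with hmn | hmn
  · exact key m n hmn
  · exact (key n m hmn).symm

lemma gamma_mem_carrier (i : ℕ) : γ i ∈ X.carrier (Hd i) :=
  ⟨γ (i+1), adj_of_sepF_singleton (sep_step hγ hHd i), hHd i⟩

lemma gamma_mem_carrier' (i : ℕ) : γ (i+1) ∈ X.carrier (Hd i) :=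
  ⟨γ i, adj_symm (adj_of_sepF_singleton (sep_step hγ hHd i)), Ne.symm (hHd i)⟩

lemma contact_step (i : ℕ) : X.Contact (Hd i) (Hd (i+1)) := by
  refine ⟨fun e => by have := Hd_inj hγ hHd e; omega, ?_⟩
  rintro ⟨h'', b, ⟨hne1, c₁, hc₁⟩, ⟨hne2, c₂, hc₂⟩⟩
  have hc₂' : ∀ z, X.side h'' z = b → X.side (Hd (i+1)) z = c₂ := by
    intro z hz; exact hc₂ z (by simpa using hz)
  by_cases hq : X.side h'' (γ (i+1)) = b
  · -- then γ (i+2) is on side !b, so h'' separates the step i+1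
    have hr : X.side h'' (γ (i+2)) ≠ b := by
      intro hr
      exact hHd (i+1) (((hc₂' _ hq).trans (hc₂' _ hr).symm))
    have hsep : h'' ∈ X.sepF (γ (i+1)) (γ (i+1+1)) :=
      mem_sepF.2 (show X.side h'' (γ (i+1)) ≠ X.side h'' (γ (i+2)) by
        rw [hq]; exact fun e => hr e.symm)
    rw [sep_step hγ hHd (i+1)] at hsep
    exact hne2 (Finset.mem_singleton.1 hsep).symm
  · -- γ (i+1) on side !b; then γ i must be on side b, so h'' separates step i
    have hq' : X.side h'' (γ (i+1)) = !b := bool_ne_iff.1 hq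
    have hp : X.side h'' (γ i) = b := by
      by_contra hp
      have hp' : X.side h'' (γ i) = !b := bool_ne_iff.1 hp
      exact hHd i ((hc₁ _ hp').trans (hc₁ _ hq').symm)
    have hsep : h'' ∈ X.sepF (γ i) (γ (i+1)) :=
      mem_sepF.2 (show X.side h'' (γ i) ≠ X.side h'' (γ (i+1)) by
        rw [hp, hq']; simp)
    rw [sep_step hγ hHd i] at hsep
    exact hne1 (Finset.mem_singleton.1 hsep).symm

lemma chain_exists (i j : ℕ) :
    ∃ cc : ℕ → X.H, cc 0 = Hd i ∧ cc (Nat.dist i j) = Hd j ∧ X.CChain cc (Nat.dist i j) ∧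
      ∀ q, ∃ n, cc q = Hd n := by
  rcases le_total i j with hij | hij
  · refine ⟨fun q => Hd (min (i + q) j), by simp [Nat.min_eq_left hij], ?_, ?_, fun q => ⟨_, rfl⟩⟩
    · show Hd (min (i + Nat.dist i j) j) = Hd j
      rw [Nat.dist_eq_sub_of_le hij]
      congr 1
      omega
    · intro q hq
      rw [Nat.dist_eq_sub_of_le hij] at hq
      show X.Contact (Hd (min (i+q) j)) (Hd (min (i+q+1) j))
      have e1 : min (i+q) j = i + q := Nat.min_eq_left (by omega)
      have e2 : min (i+q+1) j = i + q + 1 := Nat.min_eq_left (by omega)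
      rw [e1, e2]
      exact contact_step hγ hHd (i+q)
  · have hdd : Nat.dist i j = i - j := by
      rw [Nat.dist_comm]; exact Nat.dist_eq_sub_of_le hij
    refine ⟨fun q => Hd (max (i - q) j), by simp [Nat.max_eq_left hij], ?_, ?_, fun q => ⟨_, rfl⟩⟩
    · show Hd (max (i - Nat.dist i j) j) = Hd j
      rw [hdd]
      congr 1
      omega
    · intro q hq
      rw [hdd] at hq
      show X.Contact (Hd (max (i-q) j)) (Hd (max (i-(q+1)) j))
      have e1 : max (i-q) j = i - q := Nat.max_eq_left (by omega)
      have e2 : max (i-(q+1)) j = i - q - 1 := by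
        rw [Nat.max_eq_left (by omega)]
        omega
      rw [e1, e2]
      have e3 : i - q = (i - q - 1) + 1 := by omega
      rw [e3]
      exact contact_symm (contact_step hγ hHd (i - q - 1))

end Ray

end CCC
namespace CCC

open scoped Classical

variable {X : CCC} {γ : ℕ → X.V} {Hd : ℕ → X.H}

section Main

variable (hγ : X.IsGeodesicRay γ)
  (hHd : ∀ i, X.side (Hd i) (γ i) ≠ X.side (Hd i) (γ (i + 1)))

include hγ hHd

/-- Claim A: every hyperplane dual to γ between `i` and `j` contacts (or is)
one of the hyperplanes of any contact-chain from `Hd i` to `Hd j`. -/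
lemma claimA {i j k : ℕ} (hik : i ≤ k) (hkj : k < j) {d : ℕ} {cc : ℕ → X.H}
    (h0 : cc 0 = Hd i) (hdc : cc d = Hd j) (hch : X.CChain cc d) :
    ∃ m, m ≤ d ∧ (X.Contact (Hd k) (cc m) ∨ Hd k = cc m) := by
  rcases Nat.eq_zero_or_pos d with hd0 | hdpos
  · subst hd0
    rw [h0] at hdc
    have := Hd_inj hγ hHd hdc
    omega
  have hwex : ∀ m, m < d → ∃ ww, ww ∈ X.carrier (cc m) ∧ ww ∈ X.carrier (cc (m+1)) :=
    fun m hm => carriers_meet (hch m hm)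
  set w : ℕ → X.V := fun m => if hm : m < d then (hwex m hm).choose else γ j with hw
  have hw1 : ∀ m (hm : m < d), w m ∈ X.carrier (cc m) := by
    intro m hm
    simp only [w, dif_pos hm]
    exact (hwex m hm).choose_spec.1
  have hw2 : ∀ m (hm : m < d), w m ∈ X.carrier (cc (m+1)) := by
    intro m hm
    simp only [w, dif_pos hm]
    exact (hwex m hm).choose_spec.2
  set pts : ℕ → X.V := fun m => if m = 0 then γ i else if m ≤ d then w (m-1) else γ j with hp
  have hpts0 : pts 0 = γ i := by simp [pts]
  have hptsd : pts (d+1) = γ j := by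
    simp only [pts, if_neg (by omega : ¬ (d+1 = 0)), if_neg (by omega : ¬ (d+1 ≤ d))]
  have hptsm : ∀ m, 1 ≤ m → m ≤ d → pts m = w (m-1) := by
    intro m h1 h2
    simp only [pts, if_neg (by omega : ¬ (m = 0)), if_pos h2]
  have hsep : X.side (Hd k) (pts 0) ≠ X.side (Hd k) (pts (d+1)) := by
    rw [hpts0, hptsd]
    exact side_Hd_ne hγ hHd hik hkj
  obtain ⟨q, hq, hqs⟩ := exists_cross hsep
  -- both pts q and pts (q+1) lie in the carrier of cc m for a suitable m
  have hcar : ∃ m, m ≤ d ∧ pts q ∈ X.carrier (cc m) ∧ pts (q+1) ∈ X.carrier (cc m) := by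
    rcases Nat.eq_zero_or_pos q with hq0 | hqpos
    · subst hq0
      refine ⟨0, by omega, ?_, ?_⟩
      · rw [hpts0, h0]; exact gamma_mem_carrier hγ hHd i
      · rw [hptsm 1 le_rfl (by omega)]
        exact hw1 0 hdpos
    · rcases Nat.lt_or_ge q d with hqd | hqd
      · refine ⟨q, by omega, ?_, ?_⟩
        · rw [hptsm q hqpos (by omega)]
          have : q - 1 + 1 = q := by omega
          have h2 := hw2 (q-1) (by omega)
          rw [this] at h2
          exact h2
        · rw [hptsm (q+1) (by omega) (by omega)]
          have : q + 1 - 1 = q := by omega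
          rw [this]
          exact hw1 q hqd
      · have hqd' : q = d := by omega
        subst hqd'
        refine ⟨q, le_rfl, ?_, ?_⟩
        · rw [hptsm q hqpos le_rfl]
          have : q - 1 + 1 = q := by omega
          have h2 := hw2 (q-1) (by omega)
          rw [this] at h2
          exact h2
        · rw [hptsd, hdc]
          exact gamma_mem_carrier hγ hHd j
  obtain ⟨m, hm, hc1, hc2⟩ := hcar
  by_cases heq : Hd k = cc m
  · exact ⟨m, hm, Or.inr heq⟩
  · exact ⟨m, hm, Or.inl (contact_of_carrier hc1 hc2 hqs heq)⟩

/-- Pigeonhole: a contact-chain of length `d` between `Hd i` and `Hd j`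
bounds `j - i` in terms of `d`. -/
lemma window_bound (C : ℕ)
    (hC : ∀ (c : X.H) (S : Finset ℕ), (∀ k ∈ S, X.Contact (Hd k) c ∨ Hd k = c) → S.card ≤ C)
    {i j : ℕ} (hij : i ≤ j) {d : ℕ} {cc : ℕ → X.H} (h0 : cc 0 = Hd i) (hdc : cc d = Hd j)
    (hch : X.CChain cc d) : j - i ≤ (d+1) * C := by
  rcases Nat.eq_or_lt_of_le hij with he | hij'
  · subst he; simp
  have hcover : Finset.Ico i j ⊆ (Finset.range (d+1)).biUnion
      (fun m => (Finset.Ico i j).filter (fun k => X.Contact (Hd k) (cc m) ∨ Hd k = cc m)) := by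
    intro k hk
    rw [Finset.mem_Ico] at hk
    obtain ⟨m, hm, hcm⟩ := claimA hγ hHd hk.1 hk.2 h0 hdc hch
    exact Finset.mem_biUnion.2 ⟨m, Finset.mem_range.2 (by omega),
      Finset.mem_filter.2 ⟨Finset.mem_Ico.2 hk, hcm⟩⟩
  calc j - i = (Finset.Ico i j).card := (Nat.card_Ico i j).symm
    _ ≤ ((Finset.range (d+1)).biUnion
      (fun m => (Finset.Ico i j).filter (fun k => X.Contact (Hd k) (cc m) ∨ Hd k = cc m))).card :=
        Finset.card_le_card hcover
    _ ≤ ∑ m ∈ Finset.range (d+1),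
        ((Finset.Ico i j).filter (fun k => X.Contact (Hd k) (cc m) ∨ Hd k = cc m)).card :=
        Finset.card_biUnion_le
    _ ≤ (d+1) * C := by
        rw [← Finset.card_range (d+1)]
        have := Finset.sum_le_card_nsmul (Finset.range (d+1))
          (fun m => ((Finset.Ico i j).filter
            (fun k => X.Contact (Hd k) (cc m) ∨ Hd k = cc m)).card) C
          (fun m _ => hC (cc m) _ (fun k hk => (Finset.mem_filter.1 hk).2))
        simpa using this


/-- Claim B: assuming no `K_{p,p}` in `Λ(γ)` and no long stays near carriers,
the set of moments whose dual hyperplane contacts a fixed hyperplane is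
uniformly bounded. -/
lemma claimB (p t : ℕ)
    (np : ∀ A B : Finset X.H, ¬(A.card = p ∧ B.card = p ∧ Disjoint A B ∧
      (∀ a ∈ A, a ∈ X.WSet γ) ∧ (∀ b ∈ B, b ∈ X.WSet γ) ∧
      ∀ a ∈ A, ∀ b ∈ B, X.Contact a b))
    (nt : ∀ (h : X.H) (i : ℕ), ∃ k, k ≤ t ∧ ∀ y ∈ X.carrier h, ¬(X.dist (γ (i+k)) y ≤ 4*p+4))
    (c : X.H) (S : Finset ℕ) (hS : ∀ k ∈ S, X.Contact (Hd k) c ∨ Hd k = c) :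
    S.card ≤ t + 2*p + 4 := by
  by_contra hbig
  push_neg at hbig
  have hSne : S.Nonempty := Finset.card_pos.1 (by omega)
  set k₁ := S.min' hSne with hk₁
  set 𝒜 : Set X.H := {h | ∀ k ∈ S, X.Contact (Hd k) h ∨ Hd k = h} with h𝒜
  have hc𝒜 : c ∈ 𝒜 := hS
  have hPne : {d | ∃ h ∈ 𝒜, X.distC (γ k₁) h = d}.Nonempty := ⟨_, c, hc𝒜, rfl⟩
  obtain ⟨cs, hcs𝒜, hcsd⟩ := Nat.sInf_mem hPne
  have hcsmin : ∀ h ∈ 𝒜, X.distC (γ k₁) cs ≤ X.distC (γ k₁) h := by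
    intro h hh
    rw [hcsd]
    exact Nat.sInf_le ⟨h, hh, rfl⟩
  have hwk : ∀ k ∈ S, ∃ w, w ∈ X.carrier (Hd k) ∧ w ∈ X.carrier cs := by
    intro k hk
    rcases hcs𝒜 k hk with hcon | heq
    · exact carriers_meet hcon
    · exact ⟨γ k, gamma_mem_carrier hγ hHd k, heq ▸ gamma_mem_carrier hγ hHd k⟩
  -- key1: every hyperplane separating a moment of γ from the carrier of cs is crossed by γ
  have key1 : ∀ u, u ∈ X.sepCset (γ k₁) cs → u ∈ X.WSet γ := by
    intro u hu
    by_contra hnw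
    have hu𝒜 : u ∈ 𝒜 := by
      intro k hk
      obtain ⟨w, hw1, hw2⟩ := hwk k hk
      have hsides : X.side u (γ k) ≠ X.side u w := by
        rw [not_WSet_const hγ hHd hnw k k₁]
        exact fun e => hu w hw2 e.symm
      have hne : u ≠ Hd k := fun e => hnw (e ▸ Hd_mem_WSet hγ hHd k)
      exact Or.inl (contact_symm (contact_of_carrier (gamma_mem_carrier hγ hHd k) hw1 hsides hne))
    obtain ⟨g, hgc, hgd, hgsep⟩ := gate_full (γ k₁) cs
    have husep : X.side u (γ k₁) ≠ X.side u g := by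
      have hmm : u ∈ (X.sepF (γ k₁) g : Set X.H) := hgsep ▸ hu
      exact mem_sepF.1 hmm
    obtain ⟨path, hp0, hpd, hpadj⟩ := exists_geod (X.dist (γ k₁) g) (γ k₁) g rfl
    have hcross : ∃ q, q < X.dist (γ k₁) g ∧ X.side u (path q) ≠ X.side u (path (q+1)) := by
      apply exists_cross
      rw [hp0, hpd]
      exact husep
    obtain ⟨q, hq, hqs⟩ := hcross
    have hqcar : path q ∈ X.carrier u := ⟨path (q+1), hpadj q hq, hqs⟩
    have hd1 : X.distC (γ k₁) u ≤ q := by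
      calc X.distC (γ k₁) u ≤ X.dist (γ k₁) (path q) := distC_le hqcar
        _ ≤ q := by
            have hcl := dist_chain_le hpadj q (le_of_lt hq)
            rw [hp0] at hcl
            exact hcl
    have := hcsmin u hu𝒜
    omega
  have key1' : ∀ k u, u ∈ X.sepCset (γ k) cs → u ∈ X.WSet γ := by
    intro k u hu
    by_contra hnw
    refine hnw (key1 u ?_)
    intro w hw
    rw [not_WSet_const hγ hHd hnw k₁ k]
    exact hu w hw
  -- index sets
  have hIfin : ∀ k : ℕ, {m : ℕ | Hd m ∈ X.sepCset (γ k) cs}.Finite := by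
    intro k
    exact Set.Finite.preimage (Set.injOn_of_injective (Hd_inj hγ hHd))
      (sepCset_finite (γ k) cs)
  have hImem : ∀ k m, m ∈ (hIfin k).toFinset ↔
      (∀ w ∈ X.carrier cs, X.side (Hd m) w ≠ X.side (Hd m) (γ k)) := by
    intro k m
    rw [Set.Finite.mem_toFinset]
    exact Iff.rfl
  have hcard_le : ∀ k, X.distC (γ k) cs ≤ ((hIfin k).toFinset).card := by
    intro k
    rw [distC_eq_ncard]
    have hsub : X.sepCset (γ k) cs ⊆ Hd '' ((hIfin k).toFinset : Set ℕ) := by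
      intro u hu
      obtain ⟨m, rfl⟩ := (mem_WSet_iff hγ hHd).1 (key1' k u hu)
      refine ⟨m, ?_, rfl⟩
      rw [Finset.mem_coe, Set.Finite.mem_toFinset]
      exact hu
    calc (X.sepCset (γ k) cs).ncard
        ≤ (Hd '' ((hIfin k).toFinset : Set ℕ)).ncard :=
          Set.ncard_le_ncard hsub (((hIfin k).toFinset.finite_toSet).image Hd)
      _ ≤ (((hIfin k).toFinset : Set ℕ)).ncard :=
          Set.ncard_image_le ((hIfin k).toFinset.finite_toSet)
      _ = ((hIfin k).toFinset).card := Set.ncard_coe_finset _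
  -- membership transfer along γ
  have hmono_up : ∀ k k' m, m ∈ (hIfin k).toFinset → k ≤ m → k' ≤ m → m ∈ (hIfin k').toFinset := by
    intro k k' m hm hkm hk'm
    rw [hImem] at hm ⊢
    intro w hw
    have e : X.side (Hd m) (γ k') = X.side (Hd m) (γ k) := by
      rw [side_Hd_left hγ hHd hk'm, side_Hd_left hγ hHd hkm]
    rw [e]
    exact hm w hw
  have hmono_dn : ∀ k k' m, m ∈ (hIfin k).toFinset → m < k → m < k' → m ∈ (hIfin k').toFinset := by
    intro k k' m hm hkm hk'm
    rw [hImem] at hm ⊢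
    intro w hw
    have e : X.side (Hd m) (γ k') = X.side (Hd m) (γ k) := by
      rw [side_Hd_right hγ hHd hk'm, side_Hd_right hγ hHd hkm]
    rw [e]
    exact hm w hw
  -- contact from membership
  have key3 : ∀ k' ∈ S, ∀ m, m ∈ (hIfin k').toFinset → m ≠ k' → X.Contact (Hd m) (Hd k') := by
    intro k' hk' m hm hne
    obtain ⟨w, hw1, hw2⟩ := hwk k' hk'
    rw [hImem] at hm
    refine contact_of_carrier (gamma_mem_carrier hγ hHd k') hw1 ?_ ?_
    · exact fun e => hm w hw2 e.symm
    · exact fun e => hne (Hd_inj hγ hHd e)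
  -- bipartite extraction: upward
  have key4 : ∀ k₀ ∈ S, p ≤ (S.filter (fun k => k < k₀)).card →
      p ≤ (((hIfin k₀).toFinset).filter (fun m => k₀ < m)).card → False := by
    intro k₀ hk₀ hbelow hup
    obtain ⟨T, hTsub, hTcard⟩ := Finset.exists_subset_card_eq hbelow
    obtain ⟨M, hMsub, hMcard⟩ := Finset.exists_subset_card_eq hup
    refine np (T.image Hd) (M.image Hd) ⟨?_, ?_, ?_, ?_, ?_, ?_⟩
    · rw [Finset.card_image_of_injective _ (Hd_inj hγ hHd), hTcard]
    · rw [Finset.card_image_of_injective _ (Hd_inj hγ hHd), hMcard]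
    · rw [Finset.disjoint_left]
      rintro a ha hb
      obtain ⟨k', hk', rfl⟩ := Finset.mem_image.1 ha
      obtain ⟨m, hm, hme⟩ := Finset.mem_image.1 hb
      have hmk : m = k' := Hd_inj hγ hHd hme
      have h1 := (Finset.mem_filter.1 (hTsub hk')).2
      have h2 := (Finset.mem_filter.1 (hMsub hm)).2
      omega
    · rintro a ha
      obtain ⟨k', _, rfl⟩ := Finset.mem_image.1 ha
      exact Hd_mem_WSet hγ hHd k'
    · rintro b hb
      obtain ⟨m, _, rfl⟩ := Finset.mem_image.1 hb
      exact Hd_mem_WSet hγ hHd m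
    · rintro a ha b hb
      obtain ⟨k', hk', rfl⟩ := Finset.mem_image.1 ha
      obtain ⟨m, hm, rfl⟩ := Finset.mem_image.1 hb
      have hk'S : k' ∈ S := (Finset.mem_filter.1 (hTsub hk')).1
      have hk'lt : k' < k₀ := (Finset.mem_filter.1 (hTsub hk')).2
      have hmI : m ∈ (hIfin k₀).toFinset := (Finset.mem_filter.1 (hMsub hm)).1
      have hmgt : k₀ < m := (Finset.mem_filter.1 (hMsub hm)).2
      have hmI' : m ∈ (hIfin k').toFinset := hmono_up k₀ k' m hmI (by omega) (by omega)
      exact contact_symm (key3 k' hk'S m hmI' (by omega))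
  -- bipartite extraction: downward
  have key4' : ∀ k₀ ∈ S, p ≤ (S.filter (fun k => k₀ < k)).card →
      p ≤ (((hIfin k₀).toFinset).filter (fun m => m < k₀)).card → False := by
    intro k₀ hk₀ habove hdn
    obtain ⟨T, hTsub, hTcard⟩ := Finset.exists_subset_card_eq habove
    obtain ⟨M, hMsub, hMcard⟩ := Finset.exists_subset_card_eq hdn
    refine np (T.image Hd) (M.image Hd) ⟨?_, ?_, ?_, ?_, ?_, ?_⟩
    · rw [Finset.card_image_of_injective _ (Hd_inj hγ hHd), hTcard]
    · rw [Finset.card_image_of_injective _ (Hd_inj hγ hHd), hMcard]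
    · rw [Finset.disjoint_left]
      rintro a ha hb
      obtain ⟨k', hk', rfl⟩ := Finset.mem_image.1 ha
      obtain ⟨m, hm, hme⟩ := Finset.mem_image.1 hb
      have hmk : m = k' := Hd_inj hγ hHd hme
      have h1 := (Finset.mem_filter.1 (hTsub hk')).2
      have h2 := (Finset.mem_filter.1 (hMsub hm)).2
      omega
    · rintro a ha
      obtain ⟨k', _, rfl⟩ := Finset.mem_image.1 ha
      exact Hd_mem_WSet hγ hHd k'
    · rintro b hb
      obtain ⟨m, _, rfl⟩ := Finset.mem_image.1 hb
      exact Hd_mem_WSet hγ hHd m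
    · rintro a ha b hb
      obtain ⟨k', hk', rfl⟩ := Finset.mem_image.1 ha
      obtain ⟨m, hm, rfl⟩ := Finset.mem_image.1 hb
      have hk'S : k' ∈ S := (Finset.mem_filter.1 (hTsub hk')).1
      have hk'gt : k₀ < k' := (Finset.mem_filter.1 (hTsub hk')).2
      have hmI : m ∈ (hIfin k₀).toFinset := (Finset.mem_filter.1 (hMsub hm)).1
      have hmlt : m < k₀ := (Finset.mem_filter.1 (hMsub hm)).2
      have hmI' : m ∈ (hIfin k').toFinset := hmono_dn k₀ k' m hmI (by omega) (by omega)
      exact contact_symm (key3 k' hk'S m hmI' (by omega))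
  -- middle moments are close to the carrier of cs
  have key5 : ∀ k₀ ∈ S, p ≤ (S.filter (fun k => k < k₀)).card →
      p ≤ (S.filter (fun k => k₀ < k)).card → X.distC (γ k₀) cs ≤ 2*p + 1 := by
    intro k₀ hk₀ h1 h2
    have hup : ¬ p ≤ (((hIfin k₀).toFinset).filter (fun m => k₀ < m)).card :=
      fun hh => key4 k₀ hk₀ h1 hh
    have hdn : ¬ p ≤ (((hIfin k₀).toFinset).filter (fun m => m < k₀)).card :=
      fun hh => key4' k₀ hk₀ h2 hh
    push_neg at hup hdn
    have hsplit : (hIfin k₀).toFinset ⊆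
        (((hIfin k₀).toFinset).filter (fun m => k₀ < m)) ∪
        (((hIfin k₀).toFinset).filter (fun m => m < k₀)) ∪ {k₀} := by
      intro m hm
      rcases Nat.lt_trichotomy m k₀ with hc | hc | hc
      · exact Finset.mem_union_left _ (Finset.mem_union_right _ (Finset.mem_filter.2 ⟨hm, hc⟩))
      · exact Finset.mem_union_right _ (by simp [hc])
      · exact Finset.mem_union_left _ (Finset.mem_union_left _ (Finset.mem_filter.2 ⟨hm, hc⟩))
    have hcard2 : ((hIfin k₀).toFinset).card ≤ 2*p + 1 := by
      have hc1 := Finset.card_le_card hsplit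
      have hc2 := Finset.card_union_le
        ((((hIfin k₀).toFinset).filter (fun m => k₀ < m)) ∪
          (((hIfin k₀).toFinset).filter (fun m => m < k₀))) ({k₀} : Finset ℕ)
      have hc3 := Finset.card_union_le (((hIfin k₀).toFinset).filter (fun m => k₀ < m))
        (((hIfin k₀).toFinset).filter (fun m => m < k₀))
      simp only [Finset.card_singleton] at hc2
      omega
    have := hcard_le k₀
    omega
  -- window endpoints
  set Sup := S.filter (fun k => p ≤ (S.filter (fun k' => k' < k)).card) with hSup
  set Sdn := S.filter (fun k => p ≤ (S.filter (fun k' => k < k')).card) with hSdn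
  have hSupne : Sup.Nonempty := by
    refine ⟨S.max' hSne, Finset.mem_filter.2 ⟨S.max'_mem hSne, ?_⟩⟩
    have he : S.filter (fun k' => k' < S.max' hSne) = S.erase (S.max' hSne) := by
      ext a
      simp only [Finset.mem_filter, Finset.mem_erase]
      constructor
      · rintro ⟨h1, h2⟩; exact ⟨by omega, h1⟩
      · rintro ⟨h1, h2⟩
        refine ⟨h2, ?_⟩
        have := S.le_max' a h2
        omega
    rw [he, Finset.card_erase_of_mem (S.max'_mem hSne)]
    omega
  have hSdnne : Sdn.Nonempty := by
    refine ⟨S.min' hSne, Finset.mem_filter.2 ⟨S.min'_mem hSne, ?_⟩⟩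
    have he : S.filter (fun k' => S.min' hSne < k') = S.erase (S.min' hSne) := by
      ext a
      simp only [Finset.mem_filter, Finset.mem_erase]
      constructor
      · rintro ⟨h1, h2⟩; exact ⟨by omega, h1⟩
      · rintro ⟨h1, h2⟩
        refine ⟨h2, ?_⟩
        have := S.min'_le a h2
        omega
    rw [he, Finset.card_erase_of_mem (S.min'_mem hSne)]
    omega
  set klo := Sup.min' hSupne with hklo
  set khi := Sdn.max' hSdnne with hkhi
  have hkloS := Finset.mem_filter.1 (Sup.min'_mem hSupne)
  have hkhiS := Finset.mem_filter.1 (Sdn.max'_mem hSdnne)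
  -- middle property
  have hmid : ∀ k ∈ S, klo ≤ k → k ≤ khi → X.distC (γ k) cs ≤ 2*p + 1 := by
    intro k hk h1 h2
    apply key5 k hk
    · refine le_trans hkloS.2 (Finset.card_le_card ?_)
      intro a ha
      rw [Finset.mem_filter] at ha ⊢
      exact ⟨ha.1, by omega⟩
    · refine le_trans hkhiS.2 (Finset.card_le_card ?_)
      intro a ha
      rw [Finset.mem_filter] at ha ⊢
      exact ⟨ha.1, by omega⟩
  -- counting
  have hlow : (S.filter (fun k => k < klo)).card ≤ p := by
    by_contra hcon
    push_neg at hcon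
    have hne' : (S.filter (fun k => k < klo)).Nonempty := Finset.card_pos.1 (by omega)
    set km := (S.filter (fun k => k < klo)).max' hne' with hkm
    have hkmm := Finset.mem_filter.1 ((S.filter (fun k => k < klo)).max'_mem hne')
    have hkmSup : km ∈ Sup := by
      refine Finset.mem_filter.2 ⟨hkmm.1, ?_⟩
      have hsub2 : (S.filter (fun k => k < klo)).erase km ⊆ S.filter (fun k' => k' < km) := by
        intro a ha
        rw [Finset.mem_erase] at ha
        have ham := Finset.mem_filter.1 ha.2
        rw [Finset.mem_filter]
        refine ⟨ham.1, ?_⟩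
        have := Finset.le_max' _ a ha.2
        omega
      have hcc := Finset.card_le_card hsub2
      rw [Finset.card_erase_of_mem ((S.filter (fun k => k < klo)).max'_mem hne')] at hcc
      omega
    have := Sup.min'_le km hkmSup
    have := hkmm.2
    omega
  have hhigh : (S.filter (fun k => khi < k)).card ≤ p := by
    by_contra hcon
    push_neg at hcon
    have hne' : (S.filter (fun k => khi < k)).Nonempty := Finset.card_pos.1 (by omega)
    set km := (S.filter (fun k => khi < k)).min' hne' with hkm
    have hkmm := Finset.mem_filter.1 ((S.filter (fun k => khi < k)).min'_mem hne')
    have hkmSdn : km ∈ Sdn := by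
      refine Finset.mem_filter.2 ⟨hkmm.1, ?_⟩
      have hsub2 : (S.filter (fun k => khi < k)).erase km ⊆ S.filter (fun k' => km < k') := by
        intro a ha
        rw [Finset.mem_erase] at ha
        have ham := Finset.mem_filter.1 ha.2
        rw [Finset.mem_filter]
        refine ⟨ham.1, ?_⟩
        have := Finset.min'_le _ a ha.2
        omega
      have hcc := Finset.card_le_card hsub2
      rw [Finset.card_erase_of_mem ((S.filter (fun k => khi < k)).min'_mem hne')] at hcc
      omega
    have := Sdn.le_max' km hkmSdn
    have := hkmm.2
    omega
  have hcount : S.card ≤ (khi - klo + 1) + 2*p := by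
    have hsub3 : S ⊆ (S.filter (fun k => k < klo)) ∪ (S.filter (fun k => khi < k)) ∪
        (S.filter (fun k => klo ≤ k ∧ k ≤ khi)) := by
      intro a ha
      rcases Nat.lt_or_ge a klo with hc | hc
      · exact Finset.mem_union_left _ (Finset.mem_union_left _ (Finset.mem_filter.2 ⟨ha, hc⟩))
      · rcases Nat.lt_or_ge khi a with hc2 | hc2
        · exact Finset.mem_union_left _ (Finset.mem_union_right _ (Finset.mem_filter.2 ⟨ha, hc2⟩))
        · exact Finset.mem_union_right _ (Finset.mem_filter.2 ⟨ha, hc, hc2⟩)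
    have hc1 := Finset.card_le_card hsub3
    have hc2 := Finset.card_union_le
      ((S.filter (fun k => k < klo)) ∪ (S.filter (fun k => khi < k)))
      (S.filter (fun k => klo ≤ k ∧ k ≤ khi))
    have hc3 := Finset.card_union_le (S.filter (fun k => k < klo)) (S.filter (fun k => khi < k))
    have hIcc : (S.filter (fun k => klo ≤ k ∧ k ≤ khi)).card ≤ khi - klo + 1 := by
      have hsub4 : S.filter (fun k => klo ≤ k ∧ k ≤ khi) ⊆ Finset.Icc klo khi := by
        intro a ha
        rw [Finset.mem_filter] at ha
        exact Finset.mem_Icc.2 ha.2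
      have := Finset.card_le_card hsub4
      rw [Nat.card_Icc] at this
      omega
    omega
  have hwin : klo + t ≤ khi := by omega
  -- every point in the window is close to the carrier of cs
  have hclose : ∀ n, klo ≤ n → n ≤ khi → ∃ y ∈ X.carrier cs, X.dist (γ n) y ≤ 4*p + 2 := by
    intro n h1 h2
    have hdnne : (S.filter (fun k => klo ≤ k ∧ k ≤ n)).Nonempty :=
      ⟨klo, Finset.mem_filter.2 ⟨hkloS.1, le_rfl, h1⟩⟩
    have hupne : (S.filter (fun k => n ≤ k ∧ k ≤ khi)).Nonempty :=
      ⟨khi, Finset.mem_filter.2 ⟨hkhiS.1, h2, le_rfl⟩⟩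
    set ka := (S.filter (fun k => klo ≤ k ∧ k ≤ n)).max' hdnne with hka
    set kb := (S.filter (fun k => n ≤ k ∧ k ≤ khi)).min' hupne with hkb
    have hkam := Finset.mem_filter.1 ((S.filter (fun k => klo ≤ k ∧ k ≤ n)).max'_mem hdnne)
    have hkbm := Finset.mem_filter.1 ((S.filter (fun k => n ≤ k ∧ k ≤ khi)).min'_mem hupne)
    have hda : X.distC (γ ka) cs ≤ 2*p+1 :=
      hmid ka hkam.1 hkam.2.1 (le_trans hkam.2.2 h2)
    have hdb : X.distC (γ kb) cs ≤ 2*p+1 :=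
      hmid kb hkbm.1 (le_trans h1 hkbm.2.1) hkbm.2.2
    have hbetween : X.dist (γ ka) (γ n) + X.dist (γ n) (γ kb) = X.dist (γ ka) (γ kb) := by
      rw [hγ ka n hkam.2.2, hγ n kb hkbm.2.1, hγ ka kb (le_trans hkam.2.2 hkbm.2.1)]
      omega
    have hbet := distC_between (c := cs) hbetween
    obtain ⟨y, hy, hyd⟩ := distC_spec (γ n) cs
    exact ⟨y, hy, by omega⟩
  obtain ⟨k, hk, hfar⟩ := nt cs klo
  obtain ⟨y, hy, hyd⟩ := hclose (klo + k) (by omega) (by omega)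
  exact hfar y hy (by omega)


end Main

end CCC
/-- **Projection trichotomy I** (Theorem 3.1).  Let `γ` be a combinatorial
geodesic ray in the CAT(0) cube complex `X`, with `Hd i` the hyperplane dual
to `γ([i,i+1])`.  Then either (1) the projection `γ*` of `γ` to the contact
graph and the full subgraph `Λ(γ)` spanned by `W(γ)` include into `C(X)`
quasi-isometrically, or (2) `Λ(γ)` contains `K_{p,p}` for all `p`, or (3)
there is `R` such that `γ` has arbitrarily long connected subpaths in the
`R`-neighborhood of a single hyperplane carrier. -/
theorem projection_trichotomy_I (X : CCC) (γ : ℕ → X.V) (hγ : X.IsGeodesicRay γ)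
    (Hd : ℕ → X.H) (hHd : ∀ i, X.side (Hd i) (γ i) ≠ X.side (Hd i) (γ (i + 1))) :
    -- (1) both inclusions are quasi-isometric embeddings
    (∃ lam eps : ℕ, 1 ≤ lam ∧
      (∀ i j : ℕ,
        (Nat.dist i j : ℕ∞) ≤ (lam : ℕ∞) * X.cdist (Hd i) (Hd j) + (eps : ℕ∞) ∧
        X.cdist (Hd i) (Hd j) ≤ (lam : ℕ∞) * (Nat.dist i j : ℕ∞) + (eps : ℕ∞)) ∧
      (∀ h ∈ X.WSet γ, ∀ h' ∈ X.WSet γ,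
        X.ldist γ h h' ≤ (lam : ℕ∞) * X.cdist h h' + (eps : ℕ∞) ∧
        X.cdist h h' ≤ (lam : ℕ∞) * X.ldist γ h h' + (eps : ℕ∞))) ∨
    -- (2) `Λ(γ)` contains complete bipartite subgraphs `K_{p,p}` for all `p`
    (∀ p : ℕ, ∃ A B : Finset X.H, A.card = p ∧ B.card = p ∧ Disjoint A B ∧
      (∀ a ∈ A, a ∈ X.WSet γ) ∧ (∀ b ∈ B, b ∈ X.WSet γ) ∧
      ∀ a ∈ A, ∀ b ∈ B, X.Contact a b) ∨
    -- (3) long subpaths of `γ` near a hyperplane carrier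
    (∃ R : ℕ, ∀ t : ℕ, ∃ (h : X.H) (i : ℕ), ∀ k ≤ t,
      ∃ y ∈ X.carrier h, X.dist (γ (i + k)) y ≤ R) := by
  classical
  by_cases h2 : (∀ p : ℕ, ∃ A B : Finset X.H, A.card = p ∧ B.card = p ∧ Disjoint A B ∧
      (∀ a ∈ A, a ∈ X.WSet γ) ∧ (∀ b ∈ B, b ∈ X.WSet γ) ∧ ∀ a ∈ A, ∀ b ∈ B, X.Contact a b)
  · exact Or.inr (Or.inl h2)
  by_cases h3 : (∃ R : ℕ, ∀ t : ℕ, ∃ (h : X.H) (i : ℕ), ∀ k ≤ t,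
      ∃ y ∈ X.carrier h, X.dist (γ (i + k)) y ≤ R)
  · exact Or.inr (Or.inr h3)
  left
  rw [not_forall] at h2
  obtain ⟨p, hp⟩ := h2
  have np : ∀ A B : Finset X.H, ¬(A.card = p ∧ B.card = p ∧ Disjoint A B ∧
      (∀ a ∈ A, a ∈ X.WSet γ) ∧ (∀ b ∈ B, b ∈ X.WSet γ) ∧
      ∀ a ∈ A, ∀ b ∈ B, X.Contact a b) := by
    intro A B hAB
    exact hp ⟨A, B, hAB⟩
  have nt0 : ∃ t : ℕ, ∀ (h : X.H) (i : ℕ), ∃ k, k ≤ t ∧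
      ∀ y ∈ X.carrier h, ¬(X.dist (γ (i+k)) y ≤ 4*p+4) := by
    by_contra hcon
    push_neg at hcon
    exact h3 ⟨4*p+4, hcon⟩
  obtain ⟨t, nt⟩ := nt0
  set C := t + 2*p + 4 with hC
  have hCB : ∀ (c : X.H) (S : Finset ℕ),
      (∀ k ∈ S, X.Contact (Hd k) c ∨ Hd k = c) → S.card ≤ C :=
    CCC.claimB hγ hHd p t np nt
  -- the base two-sided estimate between Nat.dist and cdist
  have hbase : ∀ i j : ℕ,
      (Nat.dist i j : ℕ∞) ≤ ((C+1 : ℕ) : ℕ∞) * X.cdist (Hd i) (Hd j) + ((C+1 : ℕ) : ℕ∞) ∧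
      X.cdist (Hd i) (Hd j) ≤ ((C+1 : ℕ) : ℕ∞) * (Nat.dist i j : ℕ∞) + ((C+1 : ℕ) : ℕ∞) := by
    intro i j
    obtain ⟨cc, hc0, hcn, hcch, hcw⟩ := CCC.chain_exists hγ hHd i j
    have hex : ∃ n : ℕ, ∃ cc : ℕ → X.H, cc 0 = Hd i ∧ cc n = Hd j ∧ X.CChain cc n :=
      ⟨Nat.dist i j, cc, hc0, hcn, hcch⟩
    set n₀ := Nat.find hex with hn₀
    obtain ⟨cm, hm0, hmn, hmch⟩ := Nat.find_spec hex
    have hn₀le : n₀ ≤ Nat.dist i j := Nat.find_min' hex ⟨cc, hc0, hcn, hcch⟩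
    have heq : X.cdist (Hd i) (Hd j) = (n₀ : ℕ∞) := by
      apply le_antisymm
      · exact sInf_le ⟨n₀, cm, hm0, hmn, hmch, rfl⟩
      · apply le_sInf
        rintro e ⟨n, cc', h0', hn', hch', rfl⟩
        exact_mod_cast Nat.find_min' hex ⟨cc', h0', hn', hch'⟩
    have hD : Nat.dist i j ≤ (n₀ + 1) * C := by
      rcases le_total i j with hij | hij
      · rw [Nat.dist_eq_sub_of_le hij]
        exact CCC.window_bound hγ hHd C hCB hij hm0 hmn hmch
      · have hdd : Nat.dist i j = i - j := by
          rw [Nat.dist_comm]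
          exact Nat.dist_eq_sub_of_le hij
        rw [hdd]
        -- reverse the chain
        have hr0 : (fun q => cm (n₀ - q)) 0 = Hd j := by simpa using hmn
        have hrn : (fun q => cm (n₀ - q)) n₀ = Hd i := by simpa using hm0
        have hrch : X.CChain (fun q => cm (n₀ - q)) n₀ := by
          intro q hq
          have he1 : n₀ - q = (n₀ - (q+1)) + 1 := by omega
          have hcq := hmch (n₀ - (q+1)) (by omega)
          have := CCC.contact_symm hcq
          show X.Contact (cm (n₀ - q)) (cm (n₀ - (q+1)))
          rw [he1]
          exact this
        exact CCC.window_bound hγ hHd C hCB hij hr0 hrn hrch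
    constructor
    · rw [heq]
      have harith : Nat.dist i j ≤ (C+1)*n₀ + (C+1) := by
        calc Nat.dist i j ≤ (n₀+1)*C := hD
          _ = n₀*C + C := by ring
          _ ≤ (C+1)*n₀ + (C+1) := by
              have hcm : n₀*C = C*n₀ := Nat.mul_comm n₀ C
              have hdist : (C+1)*n₀ = C*n₀ + n₀ := by ring
              omega
      exact_mod_cast harith
    · rw [heq]
      have harith : n₀ ≤ (C+1) * Nat.dist i j + (C+1) := by
        have h1 : Nat.dist i j ≤ (C+1) * Nat.dist i j :=
          Nat.le_mul_of_pos_left _ (by omega)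
        omega
      exact_mod_cast harith
  refine ⟨C+1, C+1, by omega, ?_, ?_⟩
  · intro i j
    exact hbase i j
  · intro h hmemh h' hmemh'
    obtain ⟨a, rfl⟩ := (CCC.mem_WSet_iff hγ hHd).1 hmemh
    obtain ⟨b, rfl⟩ := (CCC.mem_WSet_iff hγ hHd).1 hmemh'
    constructor
    · -- ldist ≤ Nat.dist a b ≤ (C+1) * cdist + (C+1)
      obtain ⟨cc, hc0, hcn, hcch, hcw⟩ := CCC.chain_exists hγ hHd a b
      have hld : X.ldist γ (Hd a) (Hd b) ≤ ((Nat.dist a b : ℕ) : ℕ∞) := by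
        refine sInf_le ⟨Nat.dist a b, cc, hc0, hcn, ?_, hcch, rfl⟩
        intro q _
        obtain ⟨n, hn⟩ := hcw q
        rw [hn]
        exact CCC.Hd_mem_WSet hγ hHd n
      exact le_trans hld (hbase a b).1
    · -- cdist ≤ ldist ≤ (C+1) * ldist + (C+1)
      have hcl : X.cdist (Hd a) (Hd b) ≤ X.ldist γ (Hd a) (Hd b) := by
        apply sInf_le_sInf
        rintro e ⟨n, cc, h0, hn, _, hch, rfl⟩
        exact ⟨n, cc, h0, hn, hch, rfl⟩
      refine le_trans hcl ?_
      calc X.ldist γ (Hd a) (Hd b) = 1 * X.ldist γ (Hd a) (Hd b) := (one_mul _).symm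
        _ ≤ ((C+1 : ℕ) : ℕ∞) * X.ldist γ (Hd a) (Hd b) := by
            apply mul_le_mul_left
            exact_mod_cast (by omega : (1:ℕ) ≤ C+1)
        _ ≤ ((C+1 : ℕ) : ℕ∞) * X.ldist γ (Hd a) (Hd b) + ((C+1 : ℕ) : ℕ∞) := le_self_add
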